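/- arXiv:1902.04603 — 7 statements merged into one kernel-verified Lean document; each statement's English description precedes it below -/
import Mathlib

section
/- The improper integral ∫₀^∞ (ln x)/(x³ + 1) dx converges and equals −2π²/27. -/
open MeasureTheory Real Set Filter Topology

lemma hasDerivAt_aux (c : ℝ) (hc : c ≠ 0) (x : ℝ) (hx : 0 < x) :
    HasDerivAt (fun y : ℝ => y ^ c * (c * Real.log y - 1) / c ^ 2)
      (x ^ (c - 1) * Real.log x) x := by
  have h1 : HasDerivAt (fun y : ℝ => y ^ c) (c * x ^ (c - 1)) x :=
    Real.hasDerivAt_rpow_const (Or.inl hx.ne')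
  have h2 : HasDerivAt (fun y : ℝ => c * Real.log y - 1) (c * x⁻¹) x :=
    ((Real.hasDerivAt_log hx.ne').const_mul c).sub_const 1
  have h3 := (h1.mul h2).div_const (c ^ 2)
  refine h3.congr_deriv ?_
  have hxc : x ^ c = x ^ (c - 1) * x := by
    rw [Real.rpow_sub_one hx.ne']; field_simp
  rw [hxc]; field_simp; ring

lemma ioiA (m : ℕ) (hm : 2 ≤ m) :
    IntegrableOn (fun x : ℝ => Real.log x / x ^ m) (Set.Ioi 1) ∧
    ∫ x in Set.Ioi (1:ℝ), Real.log x / x ^ m = 1 / ((m : ℝ) - 1) ^ 2 := by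
  set c : ℝ := 1 - (m : ℝ) with hcdef
  have hcneg : c < 0 := by
    simp only [hcdef, sub_neg]
    exact_mod_cast lt_of_lt_of_le one_lt_two hm
  have hc : c ≠ 0 := ne_of_lt hcneg
  set G : ℝ → ℝ := fun y => y ^ c * (c * Real.log y - 1) / c ^ 2 with hG
  have hderiv : ∀ x ∈ Set.Ioi (1:ℝ), HasDerivAt G (Real.log x / x ^ m) x := by
    intro x hx
    have hx0 : (0:ℝ) < x := lt_trans one_pos hx
    have h := hasDerivAt_aux c hc x hx0
    convert h using 1
    have hcm : x ^ (c - 1) = (x ^ m : ℝ)⁻¹ := by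
      rw [show c - 1 = -(m : ℝ) by rw [hcdef]; ring,
        Real.rpow_neg hx0.le, Real.rpow_natCast]
    rw [hcm, div_eq_inv_mul]
  have hcont : ContinuousWithinAt G (Set.Ici 1) 1 := by
    apply ContinuousAt.continuousWithinAt
    have : ContinuousAt (fun y : ℝ => y ^ c) 1 :=
      Real.continuousAt_rpow_const 1 c (Or.inl one_ne_zero)
    exact (this.mul (((Real.continuousAt_log one_ne_zero).const_mul c).sub
      continuousAt_const)).div_const _
  have hpos : ∀ x ∈ Set.Ioi (1:ℝ), 0 ≤ Real.log x / x ^ m := by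
    intro x hx
    have hx1 : (1:ℝ) ≤ x := le_of_lt hx
    exact div_nonneg (Real.log_nonneg hx1) (by positivity)
  have hg : Tendsto G atTop (𝓝 0) := by
    have t1 : Tendsto (fun x : ℝ => x ^ c * Real.log x) atTop (𝓝 0) := by
      have := (isLittleO_log_rpow_atTop (show (0:ℝ) < -c by linarith)).tendsto_div_nhds_zero
      refine this.congr' ?_
      filter_upwards [eventually_gt_atTop (0:ℝ)] with x hx
      rw [div_eq_mul_inv, ← Real.rpow_neg hx.le, neg_neg, mul_comm]
    have t2 : Tendsto (fun x : ℝ => x ^ c) atTop (𝓝 0) := by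
      have := tendsto_rpow_neg_atTop (show (0:ℝ) < -c by linarith)
      simpa [neg_neg] using this
    have key := ((t1.const_mul c).sub t2).div_const (c ^ 2)
    have hGeq : G = fun y => (c * (y ^ c * Real.log y) - y ^ c) / c ^ 2 := by
      funext y; rw [hG]; ring
    rw [hGeq]
    simpa using key
  have hG1 : G 1 = -(1 / c ^ 2) := by
    rw [hG]; simp; ring
  constructor
  · exact integrableOn_Ioi_deriv_of_nonneg hcont hderiv hpos hg
  · rw [integral_Ioi_of_hasDerivAt_of_nonneg hcont hderiv hpos hg, hG1]
    rw [show (m:ℝ) - 1 = -c by rw [hcdef]; ring]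
    ring

-- the -log x ≤ 2/√x bound
lemma neg_log_le (x : ℝ) (hx : 0 < x) : -Real.log x ≤ 2 * x ^ (-(1/2) : ℝ) := by
  have h1 : Real.log (x ^ (-(1/2) : ℝ)) ≤ x ^ (-(1/2) : ℝ) - 1 :=
    Real.log_le_sub_one_of_pos (by positivity)
  rw [Real.log_rpow hx] at h1
  nlinarith [Real.rpow_nonneg hx.le (-(1/2) : ℝ)]

lemma iocB (k : ℕ) :
    IntegrableOn (fun x : ℝ => x ^ k * Real.log x) (Set.Ioc 0 1) ∧
    ∫ x in Set.Ioc (0:ℝ) 1, x ^ k * Real.log x = -(1 / ((k : ℝ) + 1) ^ 2) := by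
  have hmeas : AEStronglyMeasurable (fun x : ℝ => x ^ k * Real.log x)
      (volume.restrict (Set.Ioc (0:ℝ) 1)) :=
    ((continuous_pow k).measurable.mul Real.measurable_log).aestronglyMeasurable
  have hbd : IntegrableOn (fun x : ℝ => x ^ k * Real.log x) (Set.Ioc 0 1) := by
    have hg : IntegrableOn (fun x : ℝ => 2 * x ^ (-(1/2) : ℝ)) (Set.Ioc 0 1) :=
      ((intervalIntegral.intervalIntegrable_rpow' (by norm_num)).1).const_mul 2
    refine Integrable.mono' hg hmeas ?_
    rw [ae_restrict_iff' measurableSet_Ioc]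
    filter_upwards with x hx
    have hx0 := hx.1
    have hlog : Real.log x ≤ 0 := Real.log_nonpos hx0.le hx.2
    have hxk : x ^ k ≤ 1 := pow_le_one₀ hx0.le hx.2
    have hxk0 : (0:ℝ) ≤ x ^ k := by positivity
    rw [Real.norm_eq_abs, abs_mul, abs_of_nonneg hxk0, abs_of_nonpos hlog]
    calc x ^ k * -Real.log x ≤ 1 * -Real.log x := by nlinarith
      _ = -Real.log x := one_mul _
      _ ≤ 2 * x ^ (-(1/2) : ℝ) := neg_log_le x hx0
  refine ⟨hbd, ?_⟩
  set c : ℝ := (k : ℝ) + 1 with hcdef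
  have hc0 : (0:ℝ) < c := by positivity
  have hc : c ≠ 0 := hc0.ne'
  set G : ℝ → ℝ := fun y => y ^ c * (c * Real.log y - 1) / c ^ 2 with hG
  set S : ℕ → Set ℝ := fun n => Set.Ioc (1 / ((n : ℝ) + 1)) 1 with hS
  have hen : ∀ n : ℕ, (0:ℝ) < 1 / ((n : ℝ) + 1) := fun n => by positivity
  have hen1 : ∀ n : ℕ, 1 / ((n : ℝ) + 1) ≤ 1 := fun n => by
    rw [div_le_one (by positivity)]; simp
  have hmono : Monotone S := by
    intro i j hij
    apply Set.Ioc_subset_Ioc_left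
    apply one_div_le_one_div_of_le (by positivity)
    have : (i:ℝ) ≤ j := by exact_mod_cast hij
    linarith
  have hunion : (⋃ n, S n) = Set.Ioc (0:ℝ) 1 := by
    ext x
    simp only [hS, Set.mem_iUnion, Set.mem_Ioc]
    constructor
    · rintro ⟨n, h1, h2⟩; exact ⟨lt_trans (hen n) h1, h2⟩
    · rintro ⟨h1, h2⟩
      obtain ⟨n, hn⟩ := exists_nat_one_div_lt h1
      exact ⟨n, hn, h2⟩
  have htend := tendsto_setIntegral_of_monotone (fun n => measurableSet_Ioc) hmono
    (hunion ▸ hbd)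
  rw [hunion] at htend
  have hseq : ∀ n : ℕ, ∫ x in S n, x ^ k * Real.log x = G 1 - G (1 / ((n : ℝ) + 1)) := by
    intro n
    have hle := hen1 n
    rw [hS]
    rw [← intervalIntegral.integral_of_le hle]
    apply intervalIntegral.integral_eq_sub_of_hasDerivAt
    · intro x hx
      rw [Set.uIcc_of_le hle] at hx
      have hx0 : 0 < x := lt_of_lt_of_le (hen n) hx.1
      have h := hasDerivAt_aux c hc x hx0
      have hck : x ^ (c - 1) = x ^ k := by
        rw [show c - 1 = (k : ℝ) by rw [hcdef]; ring, Real.rpow_natCast]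
      rw [hck] at h
      exact h
    · apply ContinuousOn.intervalIntegrable
      apply ContinuousOn.mul (continuous_pow k).continuousOn
      apply Real.continuousOn_log.mono
      intro x hx
      rw [Set.uIcc_of_le hle] at hx
      exact ne_of_gt (lt_of_lt_of_le (hen n) hx.1)
  have hG0 : Tendsto G (𝓝[>] (0:ℝ)) (𝓝 0) := by
    have t1 : Tendsto (fun y : ℝ => Real.log y * y ^ c) (𝓝[>] (0:ℝ)) (𝓝 0) :=
      tendsto_log_mul_rpow_nhdsGT_zero hc0
    have t2 : Tendsto (fun y : ℝ => y ^ c) (𝓝[>] (0:ℝ)) (𝓝 0) := by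
      have hcont : ContinuousAt (fun y : ℝ => y ^ c) 0 :=
        Real.continuousAt_rpow_const 0 c (Or.inr hc0.le)
      have := hcont.continuousWithinAt (s := Set.Ioi (0:ℝ))
      rwa [ContinuousWithinAt, Real.zero_rpow hc] at this
    have key := ((t1.const_mul c).sub t2).div_const (c ^ 2)
    have hGeq : G = fun y => (c * (Real.log y * y ^ c) - y ^ c) / c ^ 2 := by
      funext y; rw [hG]; ring
    rw [hGeq]
    simpa using key
  have harg : Tendsto (fun n : ℕ => 1 / ((n : ℝ) + 1)) atTop (𝓝[>] (0:ℝ)) := by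
    rw [tendsto_nhdsWithin_iff]
    exact ⟨tendsto_one_div_add_atTop_nhds_zero_nat, .of_forall fun n => hen n⟩
  have htend2 : Tendsto (fun n : ℕ => ∫ x in S n, x ^ k * Real.log x) atTop
      (𝓝 (G 1 - 0)) := by
    simp only [hseq]
    exact tendsto_const_nhds.sub (hG0.comp harg)
  have := tendsto_nhds_unique htend htend2
  rw [this, hG]
  simp [hcdef]
  ring

lemma summable_aux {a b : ℝ} (ha : 1 ≤ a) (hb : 1 ≤ b) :
    Summable (fun n : ℕ => 1 / (a * (n:ℝ) + b) ^ 2) := by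
  have h0 : Summable (fun n : ℕ => 1 / ((n:ℝ)) ^ 2) :=
    summable_one_div_nat_pow.2 one_lt_two
  have h1 : Summable (fun n : ℕ => 1 / ((n:ℝ) + 1) ^ 2) := by
    have := (summable_nat_add_iff 1).2 h0
    refine this.congr fun n => ?_
    push_cast; ring_nf
  refine Summable.of_nonneg_of_le (fun n => by positivity) (fun n => ?_) h1
  have hn : (0:ℝ) ≤ n := Nat.cast_nonneg n
  apply one_div_le_one_div_of_le (by positivity)
  have h2 : (n:ℝ) + 1 ≤ a * n + b := by nlinarith
  exact pow_le_pow_left₀ (by positivity) h2 2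

lemma reg1 : ∫ x in Set.Ioc (0:ℝ) 1, Real.log x / (x ^ 3 + 1)
    = ∑' n : ℕ, ((-1:ℝ) ^ n * (-(1 / (3 * (n:ℝ) + 1) ^ 2))) := by
  set F : ℕ → ℝ → ℝ := fun n x => (-1:ℝ) ^ n * (x ^ (3 * n) * Real.log x) with hF
  have hint : ∀ n, Integrable (F n) (volume.restrict (Set.Ioc (0:ℝ) 1)) :=
    fun n => ((iocB (3 * n)).1).const_mul _
  have hval : ∀ n, ∫ x in Set.Ioc (0:ℝ) 1, F n x
      = (-1:ℝ) ^ n * (-(1 / (3 * (n:ℝ) + 1) ^ 2)) := by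
    intro n
    have h := MeasureTheory.integral_const_mul ((-1:ℝ)^n)
      (fun x : ℝ => x ^ (3*n) * Real.log x) (μ := volume.restrict (Set.Ioc 0 1))
    rw [hF]
    simp only
    rw [h, (iocB (3 * n)).2]
    push_cast
    ring
  have hnorm : ∀ n, ∫ x in Set.Ioc (0:ℝ) 1, ‖F n x‖ = 1 / (3 * (n:ℝ) + 1) ^ 2 := by
    intro n
    rw [setIntegral_congr_fun measurableSet_Ioc
      (g := fun x => -(x ^ (3 * n) * Real.log x)) ?_]
    · rw [MeasureTheory.integral_neg, (iocB (3 * n)).2]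
      push_cast; ring
    · intro x hx
      have h1 : Real.log x ≤ 0 := Real.log_nonpos hx.1.le hx.2
      have h2 : (0:ℝ) ≤ x ^ (3 * n) := pow_nonneg hx.1.le _
      rw [hF]
      simp only [Real.norm_eq_abs]
      rw [abs_mul, abs_pow, abs_neg, abs_one, one_pow, one_mul, abs_mul,
        abs_of_nonneg h2, abs_of_nonpos h1]
      ring
  have hsum : Summable fun n => ∫ x in Set.Ioc (0:ℝ) 1, ‖F n x‖ := by
    rw [show (fun n => ∫ x in Set.Ioc (0:ℝ) 1, ‖F n x‖)
        = fun n : ℕ => 1 / (3 * (n:ℝ) + 1) ^ 2 from funext hnorm]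
    exact summable_aux (by norm_num) (by norm_num)
  have key := MeasureTheory.integral_tsum_of_summable_integral_norm hint hsum
  have hcong : ∫ x in Set.Ioc (0:ℝ) 1, (∑' n, F n x)
      = ∫ x in Set.Ioc (0:ℝ) 1, Real.log x / (x ^ 3 + 1) := by
    apply setIntegral_congr_fun measurableSet_Ioc
    intro x hx
    simp only
    rcases eq_or_lt_of_le hx.2 with h1 | h1
    · subst h1
      simp [hF]
    · have hx0 := hx.1
      have hxn : ‖-(x ^ 3)‖ < 1 := by
        rw [norm_neg, Real.norm_eq_abs, abs_of_nonneg (by positivity)]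
        exact pow_lt_one₀ hx0.le h1 (by norm_num)
      have hFeq : ∀ n, F n x = (-(x ^ 3)) ^ n * Real.log x := by
        intro n
        rw [hF]
        simp only
        conv_rhs => rw [neg_pow, ← pow_mul]
        ring
      rw [tsum_congr hFeq, tsum_mul_right, tsum_geometric_of_norm_lt_one hxn]
      rw [sub_neg_eq_add]
      rw [inv_mul_eq_div]
      ring_nf
  calc ∫ x in Set.Ioc (0:ℝ) 1, Real.log x / (x ^ 3 + 1)
      = ∑' n, ∫ x in Set.Ioc (0:ℝ) 1, F n x := by rw [key, hcong]
    _ = _ := tsum_congr hval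

lemma reg2 : ∫ x in Set.Ioi (1:ℝ), Real.log x / (x ^ 3 + 1)
    = ∑' n : ℕ, ((-1:ℝ) ^ n * (1 / (3 * (n:ℝ) + 2) ^ 2)) := by
  set F : ℕ → ℝ → ℝ := fun n x => (-1:ℝ) ^ n * (Real.log x / x ^ (3 * n + 3)) with hF
  have hint : ∀ n, Integrable (F n) (volume.restrict (Set.Ioi (1:ℝ))) :=
    fun n => ((ioiA (3 * n + 3) (by omega)).1).const_mul _
  have hval : ∀ n, ∫ x in Set.Ioi (1:ℝ), F n x
      = (-1:ℝ) ^ n * (1 / (3 * (n:ℝ) + 2) ^ 2) := by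
    intro n
    have h := MeasureTheory.integral_const_mul ((-1:ℝ)^n)
      (fun x : ℝ => Real.log x / x ^ (3*n+3)) (μ := volume.restrict (Set.Ioi 1))
    rw [hF]
    simp only
    rw [h, (ioiA (3 * n + 3) (by omega)).2]
    push_cast
    ring_nf
  have hnorm : ∀ n, ∫ x in Set.Ioi (1:ℝ), ‖F n x‖ = 1 / (3 * (n:ℝ) + 2) ^ 2 := by
    intro n
    rw [setIntegral_congr_fun measurableSet_Ioi
      (g := fun x => Real.log x / x ^ (3 * n + 3)) ?_]
    · rw [(ioiA (3 * n + 3) (by omega)).2]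
      push_cast; ring_nf
    · intro x hx
      have hx1 : (1:ℝ) < x := hx
      have h1 : 0 ≤ Real.log x := Real.log_nonneg hx1.le
      have h2 : (0:ℝ) < x ^ (3 * n + 3) := pow_pos (lt_trans one_pos hx1) _
      rw [hF]
      simp only [norm_mul, norm_pow, norm_neg, norm_one, one_pow, one_mul,
        Real.norm_eq_abs, abs_div, abs_of_nonneg h1, abs_of_pos h2]
  have hsum : Summable fun n => ∫ x in Set.Ioi (1:ℝ), ‖F n x‖ := by
    rw [show (fun n => ∫ x in Set.Ioi (1:ℝ), ‖F n x‖)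
        = fun n : ℕ => 1 / (3 * (n:ℝ) + 2) ^ 2 from funext hnorm]
    exact summable_aux (by norm_num) (by norm_num)
  have key := MeasureTheory.integral_tsum_of_summable_integral_norm hint hsum
  have hcong : ∫ x in Set.Ioi (1:ℝ), (∑' n, F n x)
      = ∫ x in Set.Ioi (1:ℝ), Real.log x / (x ^ 3 + 1) := by
    apply setIntegral_congr_fun measurableSet_Ioi
    intro x hx
    simp only
    have hx1 : (1:ℝ) < x := hx
    have hx0 : (0:ℝ) < x := lt_trans one_pos hx1
    have hx3 : (1:ℝ) < x ^ 3 := one_lt_pow₀ hx1 (by norm_num)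
    have hxn : ‖-(x ^ 3)⁻¹‖ < 1 := by
      rw [norm_neg, Real.norm_eq_abs, abs_of_nonneg (by positivity)]
      rw [inv_lt_one_iff₀]
      right; exact hx3
    have hne : x ^ 3 ≠ 0 := by positivity
    have hFeq : ∀ n, F n x = (-(x ^ 3)⁻¹) ^ n * ((x ^ 3)⁻¹ * Real.log x) := by
      intro n
      rw [hF]
      simp only
      conv_rhs => rw [neg_pow, inv_pow, ← pow_mul]
      rw [pow_add]
      have h4 : x ^ (3*n) ≠ 0 := pow_ne_zero _ (ne_of_gt hx0)
      field_simp
    rw [tsum_congr hFeq, tsum_mul_right, tsum_geometric_of_norm_lt_one hxn,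
      sub_neg_eq_add]
    have hne2 : (1 + (x ^ 3)⁻¹) ≠ 0 := by positivity
    field_simp
  calc ∫ x in Set.Ioi (1:ℝ), Real.log x / (x ^ 3 + 1)
      = ∑' n, ∫ x in Set.Ioi (1:ℝ), F n x := by rw [key, hcong]
    _ = _ := tsum_congr hval

noncomputable def aa : ℕ → ℝ := fun k => 1 / (k : ℝ) ^ 2

lemma one_div_sq_scale (r y : ℝ) : 1 / (r * y) ^ 2 = 1 / r ^ 2 * (1 / y ^ 2) := by
  rw [mul_pow, one_div, mul_inv, one_div, one_div]

lemma sums_key :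
    (∑' n : ℕ, ((-1:ℝ) ^ n * (-(1 / (3 * (n:ℝ) + 1) ^ 2))))
      + (∑' n : ℕ, ((-1:ℝ) ^ n * (1 / (3 * (n:ℝ) + 2) ^ 2)))
      = -2 * Real.pi ^ 2 / 27 := by
  set T : ℝ := Real.pi ^ 2 / 6 with hTdef
  have hT : HasSum aa T := hasSum_zeta_two
  have hsa : Summable aa := hT.summable
  have hfib : ∀ (c j : ℕ), 0 < c → Summable (fun m : ℕ => aa (m * c + j)) := by
    intro c j hc
    exact hsa.comp_injective (fun x y hxy => by
      have h2 := Nat.add_right_cancel hxy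
      exact Nat.eq_of_mul_eq_mul_right hc h2)
  -- A j : sums over residue j mod 6 ; B j : mod 3
  set A : ℕ → ℝ := fun j => ∑' m : ℕ, aa (m * 6 + j) with hAdef
  set B : ℕ → ℝ := fun j => ∑' m : ℕ, aa (m * 3 + j) with hBdef
  have hA : ∀ j, HasSum (fun m : ℕ => aa (m * 6 + j)) (A j) :=
    fun j => (hfib 6 j (by norm_num)).hasSum
  have hB : ∀ j, HasSum (fun m : ℕ => aa (m * 3 + j)) (B j) :=
    fun j => (hfib 3 j (by norm_num)).hasSum
  -- total over Fin 6
  have hFin6 : A 0 + A 1 + A 2 + A 3 + A 4 + A 5 = T := by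
    have h1 : HasSum (aa ∘ (Nat.divModEquiv 6).symm) T :=
      (Nat.divModEquiv 6).symm.hasSum_iff.mpr hT
    have h2 : HasSum ((aa ∘ (Nat.divModEquiv 6).symm) ∘ (Equiv.prodComm (Fin 6) ℕ)) T :=
      (Equiv.prodComm (Fin 6) ℕ).hasSum_iff.mpr h1
    have h3 : HasSum (fun j : Fin 6 => A (j : ℕ)) T :=
      h2.prod_fiberwise (fun j => hA (j : ℕ))
    have h4 := (hasSum_fintype (fun j : Fin 6 => A (j : ℕ))).unique h3
    rw [Fin.sum_univ_six] at h4
    simpa using h4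
  have hFin3 : B 0 + B 1 + B 2 = T := by
    have h1 : HasSum (aa ∘ (Nat.divModEquiv 3).symm) T :=
      (Nat.divModEquiv 3).symm.hasSum_iff.mpr hT
    have h2 : HasSum ((aa ∘ (Nat.divModEquiv 3).symm) ∘ (Equiv.prodComm (Fin 3) ℕ)) T :=
      (Equiv.prodComm (Fin 3) ℕ).hasSum_iff.mpr h1
    have h3 : HasSum (fun j : Fin 3 => B (j : ℕ)) T :=
      h2.prod_fiberwise (fun j => hB (j : ℕ))
    have h4 := (hasSum_fintype (fun j : Fin 3 => B (j : ℕ))).unique h3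
    rw [Fin.sum_univ_three] at h4
    simpa using h4
  -- scalings
  have hEven : HasSum (fun m : ℕ => aa (2 * m)) (1 / 4 * T) := by
    refine (hT.mul_left (1 / 4)).congr_fun fun m => ?_
    show (1:ℝ) / ((2 * m : ℕ) : ℝ) ^ 2 = 1 / 4 * (1 / (m:ℝ) ^ 2)
    push_cast
    rw [one_div_sq_scale 2 (m:ℝ)]
    norm_num
  have hOsum : Summable (fun m : ℕ => aa (2 * m + 1)) :=
    hsa.comp_injective (fun x y hxy => by omega)
  set O : ℝ := ∑' m : ℕ, aa (2 * m + 1) with hOdef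
  have hO : HasSum (fun m : ℕ => aa (2 * m + 1)) O := hOsum.hasSum
  have hEO : 1 / 4 * T + O = T := (hEven.even_add_odd hO).unique hT
  have hA0 : A 0 = 1 / 36 * T := by
    refine (hA 0).unique ?_
    refine (hT.mul_left (1 / 36)).congr_fun fun m => ?_
    show (1:ℝ) / ((m * 6 + 0 : ℕ) : ℝ) ^ 2 = 1 / 36 * (1 / (m:ℝ) ^ 2)
    push_cast
    rw [show ((m:ℝ) * 6 + 0) = 6 * m by ring, one_div_sq_scale 6 (m:ℝ)]
    norm_num
  have hB0 : B 0 = 1 / 9 * T := by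
    refine (hB 0).unique ?_
    refine (hT.mul_left (1 / 9)).congr_fun fun m => ?_
    show (1:ℝ) / ((m * 3 + 0 : ℕ) : ℝ) ^ 2 = 1 / 9 * (1 / (m:ℝ) ^ 2)
    push_cast
    rw [show ((m:ℝ) * 3 + 0) = 3 * m by ring, one_div_sq_scale 3 (m:ℝ)]
    norm_num
  have hA3 : A 3 = 1 / 9 * O := by
    refine (hA 3).unique ?_
    refine (hO.mul_left (1 / 9)).congr_fun fun m => ?_
    show (1:ℝ) / ((m * 6 + 3 : ℕ) : ℝ) ^ 2 = 1 / 9 * (1 / ((2 * m + 1 : ℕ) : ℝ) ^ 2)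
    push_cast
    rw [show ((m:ℝ) * 6 + 3) = 3 * (2 * m + 1) by ring, one_div_sq_scale 3]
    norm_num
  have hA2 : A 2 = 1 / 4 * B 1 := by
    refine (hA 2).unique ?_
    refine ((hB 1).mul_left (1 / 4)).congr_fun fun m => ?_
    show (1:ℝ) / ((m * 6 + 2 : ℕ) : ℝ) ^ 2 = 1 / 4 * (1 / ((m * 3 + 1 : ℕ) : ℝ) ^ 2)
    push_cast
    rw [show ((m:ℝ) * 6 + 2) = 2 * (m * 3 + 1) by ring, one_div_sq_scale 2]
    norm_num
  have hA4 : A 4 = 1 / 4 * B 2 := by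
    refine (hA 4).unique ?_
    refine ((hB 2).mul_left (1 / 4)).congr_fun fun m => ?_
    show (1:ℝ) / ((m * 6 + 4 : ℕ) : ℝ) ^ 2 = 1 / 4 * (1 / ((m * 3 + 2 : ℕ) : ℝ) ^ 2)
    push_cast
    rw [show ((m:ℝ) * 6 + 4) = 2 * (m * 3 + 2) by ring, one_div_sq_scale 2]
    norm_num
  -- the combined alternating series
  set h : ℕ → ℝ := fun n => (-1:ℝ) ^ n * (-(aa (3 * n + 1))) + (-1:ℝ) ^ n * (aa (3 * n + 2))
    with hhdef
  have heven : HasSum (fun m : ℕ => h (2 * m)) (A 2 - A 1) := by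
    refine ((hA 2).sub (hA 1)).congr_fun fun m => ?_
    show (-1:ℝ) ^ (2 * m) * (-(aa (3 * (2 * m) + 1))) + (-1:ℝ) ^ (2 * m) * (aa (3 * (2 * m) + 2))
      = aa (m * 6 + 2) - aa (m * 6 + 1)
    rw [show 3 * (2 * m) + 1 = m * 6 + 1 by ring, show 3 * (2 * m) + 2 = m * 6 + 2 by ring,
      pow_mul, neg_one_sq, one_pow]
    ring
  have hodd : HasSum (fun m : ℕ => h (2 * m + 1)) (A 4 - A 5) := by
    refine ((hA 4).sub (hA 5)).congr_fun fun m => ?_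
    show (-1:ℝ) ^ (2 * m + 1) * (-(aa (3 * (2 * m + 1) + 1)))
        + (-1:ℝ) ^ (2 * m + 1) * (aa (3 * (2 * m + 1) + 2))
      = aa (m * 6 + 4) - aa (m * 6 + 5)
    rw [show 3 * (2 * m + 1) + 1 = m * 6 + 4 by ring, show 3 * (2 * m + 1) + 2 = m * 6 + 5 by ring,
      pow_succ, pow_mul, neg_one_sq, one_pow, one_mul]
    ring
  have hh : HasSum h ((A 2 - A 1) + (A 4 - A 5)) := heven.even_add_odd hodd
  -- summability of the two pieces
  have hs1 : Summable (fun n : ℕ => (-1:ℝ) ^ n * (-(aa (3 * n + 1)))) := by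
    apply Summable.of_norm
    refine (hfib 3 1 (by norm_num)).congr fun n => ?_
    have h0 : (0:ℝ) ≤ aa (3 * n + 1) := by
      show (0:ℝ) ≤ 1 / ((3 * n + 1 : ℕ) : ℝ) ^ 2
      positivity
    rw [show (3 : ℕ) * n + 1 = n * 3 + 1 by ring] at h0 ⊢
    simp [norm_mul, abs_of_nonneg h0]
  have hs2 : Summable (fun n : ℕ => (-1:ℝ) ^ n * (aa (3 * n + 2))) := by
    apply Summable.of_norm
    refine (hfib 3 2 (by norm_num)).congr fun n => ?_
    have h0 : (0:ℝ) ≤ aa (3 * n + 2) := by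
      show (0:ℝ) ≤ 1 / ((3 * n + 2 : ℕ) : ℝ) ^ 2
      positivity
    rw [show (3 : ℕ) * n + 2 = n * 3 + 2 by ring] at h0 ⊢
    simp [norm_mul, abs_of_nonneg h0]
  -- put everything together
  have htsum : (∑' n : ℕ, ((-1:ℝ) ^ n * (-(aa (3 * n + 1)))))
      + (∑' n : ℕ, ((-1:ℝ) ^ n * (aa (3 * n + 2)))) = (A 2 - A 1) + (A 4 - A 5) := by
    rw [← Summable.tsum_add hs1 hs2]
    exact hh.tsum_eq
  have e1 : (∑' n : ℕ, ((-1:ℝ) ^ n * (-(1 / (3 * (n:ℝ) + 1) ^ 2))))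
      = ∑' n : ℕ, ((-1:ℝ) ^ n * (-(aa (3 * n + 1)))) := by
    refine tsum_congr fun n => ?_
    show (-1:ℝ) ^ n * (-(1 / (3 * (n:ℝ) + 1) ^ 2))
      = (-1:ℝ) ^ n * (-(1 / ((3 * n + 1 : ℕ) : ℝ) ^ 2))
    push_cast
    ring
  have e2 : (∑' n : ℕ, ((-1:ℝ) ^ n * (1 / (3 * (n:ℝ) + 2) ^ 2)))
      = ∑' n : ℕ, ((-1:ℝ) ^ n * (aa (3 * n + 2))) := by
    refine tsum_congr fun n => ?_
    show (-1:ℝ) ^ n * (1 / (3 * (n:ℝ) + 2) ^ 2)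
      = (-1:ℝ) ^ n * (1 / ((3 * n + 2 : ℕ) : ℝ) ^ 2)
    push_cast
    ring
  rw [e1, e2, htsum]
  -- now pure arithmetic
  have hpi : T = Real.pi ^ 2 / 6 := hTdef
  linarith [hFin6, hFin3, hEO, hA0, hB0, hA3, hA2, hA4]

theorem stmt_2 :
    MeasureTheory.IntegrableOn (fun x : ℝ => Real.log x / (x^3 + 1)) (Set.Ioi 0) ∧
    ∫ x in Set.Ioi (0:ℝ), Real.log x / (x^3 + 1) = -2 * Real.pi^2 / 27 := by
  have hmeas : ∀ s : Set ℝ, AEStronglyMeasurable (fun x : ℝ => Real.log x / (x^3 + 1))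
      (volume.restrict s) := by
    intro s
    exact (Real.measurable_log.div
      (((continuous_pow 3).measurable).add_const 1)).aestronglyMeasurable
  have hIoc : IntegrableOn (fun x : ℝ => Real.log x / (x^3 + 1)) (Set.Ioc 0 1) := by
    have hg : IntegrableOn (fun x : ℝ => 2 * x ^ (-(1/2) : ℝ)) (Set.Ioc 0 1) :=
      ((intervalIntegral.intervalIntegrable_rpow' (by norm_num)).1).const_mul 2
    refine Integrable.mono' hg (hmeas _) ?_
    rw [ae_restrict_iff' measurableSet_Ioc]
    filter_upwards with x hx
    have hx0 := hx.1
    have hd : (0:ℝ) < x^3 + 1 := by positivity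
    have hlog : Real.log x ≤ 0 := Real.log_nonpos hx0.le hx.2
    rw [Real.norm_eq_abs, abs_div, abs_of_pos hd]
    calc |Real.log x| / (x^3 + 1) ≤ |Real.log x| := by
          apply div_le_self (abs_nonneg _); nlinarith [pow_pos hx0 3]
      _ = -Real.log x := abs_of_nonpos hlog
      _ ≤ 2 * x ^ (-(1/2) : ℝ) := neg_log_le x hx0
  have hIoi : IntegrableOn (fun x : ℝ => Real.log x / (x^3 + 1)) (Set.Ioi 1) := by
    refine Integrable.mono' (ioiA 3 (by norm_num)).1 (hmeas _) ?_
    rw [ae_restrict_iff' measurableSet_Ioi]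
    filter_upwards with x hx
    have hx1 : (1:ℝ) < x := hx
    have hx0 : (0:ℝ) < x := lt_trans one_pos hx1
    have hlog : 0 ≤ Real.log x := Real.log_nonneg hx1.le
    have hp : (0:ℝ) < x^3 := by positivity
    rw [Real.norm_eq_abs, abs_of_nonneg (div_nonneg hlog (by positivity))]
    exact div_le_div_of_nonneg_left hlog hp (by linarith)
  have hunion : Set.Ioc (0:ℝ) 1 ∪ Set.Ioi 1 = Set.Ioi 0 := Set.Ioc_union_Ioi_eq_Ioi zero_le_one
  constructor
  · rw [← hunion]; exact hIoc.union hIoi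
  · rw [← hunion, MeasureTheory.setIntegral_union (Set.Ioc_disjoint_Ioi le_rfl)
      measurableSet_Ioi hIoc hIoi, reg1, reg2, sums_key]
end

section
/- The improper integral ∫₀^∞ (ln x)/(x⁴ + 1) dx converges and equals −π²/(8√2). -/
open Real MeasureTheory Set Filter Topology

noncomputable def Fa (n : ℕ) (u : ℝ) : ℝ :=
  (-(Real.log u) / (n+1) - 1 / ((n:ℝ)+1)^2) * ((u ^ (n+1))⁻¹)

lemma Fa_deriv (n : ℕ) {u : ℝ} (hu : 0 < u) :
    HasDerivAt (Fa n) (Real.log u / u ^ (n+2)) u := by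
  have h1 : HasDerivAt (fun u : ℝ => -(Real.log u) / (n+1) - 1 / ((n:ℝ)+1)^2)
      (-(1/u) / (n+1)) u := by
    simpa [neg_div] using (((Real.hasDerivAt_log hu.ne').neg).div_const ((n:ℝ)+1)).sub_const (1 / ((n:ℝ)+1)^2)
  have h2 : HasDerivAt (fun u : ℝ => (u ^ (n+1))⁻¹)
      (-((n+1 : ℕ) * u ^ n) / (u ^ (n+1))^2) u :=
    (hasDerivAt_pow (n+1) u).inv (by positivity)
  have := h1.mul h2
  refine this.congr_deriv ?_
  have hu0 : u ≠ 0 := hu.ne'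
  field_simp
  push_cast
  ring

lemma Fa_tendsto (n : ℕ) : Tendsto (Fa n) atTop (𝓝 0) := by
  have h1 : Tendsto (fun u : ℝ => Real.log u / u ^ (n+1)) atTop (𝓝 0) := by
    have := (isLittleO_log_rpow_atTop
      (by positivity : (0:ℝ) < (n:ℝ)+1)).tendsto_div_nhds_zero
    refine this.congr' ?_
    filter_upwards [eventually_gt_atTop (0:ℝ)] with u hu
    rw [show ((n:ℝ)+1) = ((n+1 : ℕ) : ℝ) by push_cast; ring, Real.rpow_natCast]
  have h2 : Tendsto (fun u : ℝ => (u ^ (n+1))⁻¹) atTop (𝓝 0) :=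
    (tendsto_pow_atTop (Nat.succ_ne_zero n)).inv_tendsto_atTop
  have : Tendsto (fun u : ℝ => -(1/((n:ℝ)+1)) * (Real.log u / u ^ (n+1))
      - (1/((n:ℝ)+1)^2) * (u ^ (n+1))⁻¹) atTop (𝓝 (-(1/((n:ℝ)+1)) * 0 - (1/((n:ℝ)+1)^2) * 0)) :=
    (h1.const_mul _).sub (h2.const_mul _)
  simpa using this.congr (fun u => by unfold Fa; ring)

lemma J_int (n : ℕ) : IntegrableOn (fun u : ℝ => Real.log u / u ^ (n+2)) (Ioi 1) := by
  refine integrableOn_Ioi_deriv_of_nonneg ?_ (fun x hx => Fa_deriv n (lt_trans one_pos hx)) ?_ (Fa_tendsto n)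
  · exact (Fa_deriv n one_pos).continuousAt.continuousWithinAt
  · intro x hx
    have hx1 : (1:ℝ) < x := hx
    have : 0 ≤ Real.log x := Real.log_nonneg hx1.le
    positivity

lemma J_val (n : ℕ) : ∫ u in Ioi (1:ℝ), Real.log u / u ^ (n+2) = 1 / ((n:ℝ)+1)^2 := by
  rw [integral_Ioi_of_hasDerivAt_of_tendsto (Fa_deriv n one_pos).continuousAt.continuousWithinAt
    (fun x hx => Fa_deriv n (lt_trans one_pos hx)) (J_int n) (Fa_tendsto n)]
  simp [Fa]

example := 1

lemma bern2 (x : ℝ) : (Polynomial.map (algebraMap ℚ ℝ) (Polynomial.bernoulli 2)).eval x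
    = x^2 - x + 1/6 := by
  simp [Polynomial.bernoulli, Finset.sum_range_succ, bernoulli_eq_bernoulli'_of_ne_one,
    bernoulli'_two, bernoulli'_one, bernoulli'_zero]
  push_cast
  ring

lemma cos_k_pi_add (k : ℕ) (x : ℝ) : Real.cos (k*π + x) = (-1)^k * Real.cos x := by
  rw [show (k:ℝ)*π + x = (k:ℝ)*π - (-x) by ring, Real.cos_nat_mul_pi_sub, Real.cos_neg]

lemma integrableOn_of_bound (f : ℝ → ℝ) (n : ℕ) (hf : ContinuousOn f (Ioi 1))
    (h : ∀ u ∈ Ioi (1:ℝ), |f u| ≤ Real.log u / u ^ (n+2)) : IntegrableOn f (Ioi 1) := by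
  refine Integrable.mono' (J_int n) (hf.aestronglyMeasurable measurableSet_Ioi) ?_
  exact (ae_restrict_iff' measurableSet_Ioi).mpr (ae_of_all _ h)

lemma bound_main {n : ℕ} {u : ℝ} (hu : 1 < u) :
    |Real.log u * (1 - u^2) / (u^4+1) / u^(4*n)| ≤ Real.log u / u ^ (4*n+2) := by
  have hu0 : (0:ℝ) < u := lt_trans one_pos hu
  have hl : 0 ≤ Real.log u := Real.log_nonneg hu.le
  have h1 : |Real.log u * (1 - u^2) / (u^4+1) / u^(4*n)|
      = Real.log u * (u^2-1) / ((u^4+1) * u^(4*n)) := by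
    rw [div_div, abs_div, abs_mul, abs_of_nonneg hl, abs_of_nonpos (by nlinarith : 1 - u^2 ≤ 0),
      abs_of_nonneg (by positivity : (0:ℝ) ≤ (u^4+1) * u^(4*n)), neg_sub]
  rw [h1]
  rw [div_le_div_iff₀ (by positivity) (by positivity)]
  have hp : u ^ (4*n+2) * u^2 = u ^ (4*n+4) := by ring
  have : u ^ (4*n) * u^4 = u ^ (4*n+4) := by ring
  nlinarith [pow_pos hu0 (4*n), pow_pos hu0 (4*n+2), pow_le_pow_left₀ hu0.le (le_refl u) 2,
    mul_nonneg hl (pow_pos hu0 (4*n+2)).le, one_le_pow₀ hu.le (n := 4*n),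
    mul_le_mul_of_nonneg_left (one_le_pow₀ hu.le (n := 2)) (mul_nonneg hl (pow_pos hu0 (4*n+2)).le)]


noncomputable def G (u : ℝ) : ℝ := Real.log u * (1 - u^2) / (u^4+1)

noncomputable def tk (k : ℕ) (u : ℝ) : ℝ :=
  (-1:ℝ)^k * (Real.log u / u^(4*k+4) - Real.log u / u^(4*k+2))

noncomputable def a (k : ℕ) : ℝ := (-1:ℝ)^k * (1/((4*(k:ℝ)+3))^2 - 1/((4*(k:ℝ)+1))^2)

lemma G_cont : ContinuousOn G (Ioi 1) := by
  apply ContinuousOn.div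
  · exact (Real.continuousOn_log.mono (by intro x hx; simp; exact (lt_trans one_pos hx).ne')).mul
      (by fun_prop)
  · fun_prop
  · intro x hx; have : (1:ℝ) < x := hx; positivity

lemma G_int : IntegrableOn G (Ioi 1) := by
  refine integrableOn_of_bound G 0 G_cont fun u hu => ?_
  have := bound_main (n := 0) (mem_Ioi.mp hu)
  simpa [G] using this

lemma tk_int (k : ℕ) : IntegrableOn (tk k) (Ioi 1) := by
  have h1 := J_int (4*k+2)
  have h2 := J_int (4*k)
  have : IntegrableOn (fun u : ℝ => Real.log u / u^(4*k+4) - Real.log u / u^(4*k+2)) (Ioi 1) := by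
    have := h1.sub h2
    simpa [show 4*k+2+2 = 4*k+4 by ring, Pi.sub_def] using this
  exact this.const_mul ((-1:ℝ)^k)

lemma tk_val (k : ℕ) : ∫ u in Ioi (1:ℝ), tk k u = a k := by
  unfold tk a
  rw [integral_const_mul, integral_sub (by have := J_int (4*k+2); simp only [show 4*k+2+2 = 4*k+4 by ring] at this; exact this) (J_int (4*k))]
  have h1 := J_val (4*k+2)
  have h2 := J_val (4*k)
  rw [show 4*k+4 = 4*k+2+2 by ring, h1, h2]
  push_cast
  ring_nf

lemma partial_identity (N : ℕ) {u : ℝ} (hu : 1 < u) :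
    G u - ∑ k ∈ Finset.range N, tk k u = (-1:ℝ)^N * (G u / u^(4*N)) := by
  have hu0 : u ≠ 0 := (lt_trans one_pos hu).ne'
  have hd : u^4 + 1 ≠ 0 := by positivity
  induction N with
  | zero => simp
  | succ n ih =>
    rw [Finset.sum_range_succ, show G u - (∑ k ∈ Finset.range n, tk k u + tk n u)
      = (G u - ∑ k ∈ Finset.range n, tk k u) - tk n u by ring, ih]
    unfold G tk
    field_simp
    ring

lemma tendsto_partial : Tendsto (fun N => ∑ k ∈ Finset.range N, a k) atTop
    (𝓝 (∫ u in Ioi (1:ℝ), G u)) := by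
  rw [tendsto_iff_norm_sub_tendsto_zero]
  have key : ∀ N : ℕ, ‖(∑ k ∈ Finset.range N, a k) - ∫ u in Ioi (1:ℝ), G u‖
      ≤ 1 / ((4*N:ℝ)+1)^2 := by
    intro N
    have hsum : (∑ k ∈ Finset.range N, a k) = ∫ u in Ioi (1:ℝ), ∑ k ∈ Finset.range N, tk k u := by
      rw [MeasureTheory.integral_finset_sum _ (fun k _ => tk_int k)]
      exact Finset.sum_congr rfl fun k _ => (tk_val k).symm
    have hint : IntegrableOn (fun u => ∑ k ∈ Finset.range N, tk k u) (Ioi 1) :=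
      integrable_finset_sum _ (fun k _ => tk_int k)
    have : (∑ k ∈ Finset.range N, a k) - (∫ u in Ioi (1:ℝ), G u)
        = -∫ u in Ioi (1:ℝ), (G u - ∑ k ∈ Finset.range N, tk k u) := by
      rw [integral_sub G_int hint, hsum]; ring
    rw [this, norm_neg]
    have hb : ∀ᵐ u ∂(volume.restrict (Ioi (1:ℝ))),
        ‖G u - ∑ k ∈ Finset.range N, tk k u‖ ≤ Real.log u / u^(4*N+2) := by
      refine (ae_restrict_iff' measurableSet_Ioi).mpr (ae_of_all _ fun u hu => ?_)
      have h1 := partial_identity N (mem_Ioi.mp hu)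
      rw [h1]
      have := bound_main (n := N) (mem_Ioi.mp hu)
      calc ‖(-1:ℝ)^N * (G u / u^(4*N))‖ = |G u / u^(4*N)| := by
            rw [Real.norm_eq_abs, abs_mul, abs_pow, abs_neg, abs_one, one_pow, one_mul]
        _ ≤ Real.log u / u ^ (4*N+2) := by unfold G; simpa [div_div] using this
    calc ‖∫ u in Ioi (1:ℝ), (G u - ∑ k ∈ Finset.range N, tk k u)‖
        ≤ ∫ u in Ioi (1:ℝ), Real.log u / u^(4*N+2) :=
          norm_integral_le_of_norm_le (J_int (4*N)) hb
      _ = 1 / ((4*N:ℝ)+1)^2 := by simpa using J_val (4*N)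
  have hto : Tendsto (fun N : ℕ => 1 / ((4*N:ℝ)+1)^2) atTop (𝓝 0) := by
    apply squeeze_zero (fun N => by positivity) (g := fun N : ℕ => 1/((N:ℝ)+1))
    · intro N
      apply one_div_le_one_div_of_le (by positivity)
      nlinarith [sq_nonneg ((4*N:ℝ)+1), (Nat.cast_nonneg N : (0:ℝ) ≤ N)]
    · exact tendsto_one_div_add_atTop_nhds_zero_nat
  exact squeeze_zero (fun N => norm_nonneg _) key hto



noncomputable def f8 (n : ℕ) : ℝ := 1 / (n:ℝ)^2 * Real.cos (2 * π * n * (1/8))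

lemma h8 : HasSum f8 (π^2 * (11/192)) := by
  have h := hasSum_one_div_nat_pow_mul_cos (k := 1) one_ne_zero
    (x := (1/8 : ℝ)) (by constructor <;> norm_num)
  rw [bern2] at h
  have h2 := h.congr_fun (g := f8) fun n => by norm_num [f8]
  convert h2 using 1
  norm_num [Nat.factorial]
  ring

lemma h4 : HasSum (fun n : ℕ => 1 / (n:ℝ)^2 * Real.cos (2 * π * n * (1/4))) (π^2 * (-1/48)) := by
  have h := hasSum_one_div_nat_pow_mul_cos (k := 1) one_ne_zero
    (x := (1/4 : ℝ)) (by constructor <;> norm_num)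
  rw [bern2] at h
  have h2 := h.congr_fun (g := fun n : ℕ => 1 / (n:ℝ)^2 * Real.cos (2 * π * n * (1/4)))
    fun n => by norm_num
  convert h2 using 1
  norm_num [Nat.factorial]
  ring

lemma heven : HasSum (fun m : ℕ => f8 (2*m)) (π^2 * (-1/192)) := by
  have h1 := (h4.mul_left (1/4))
  have h2 : HasSum (fun m : ℕ => (1/4) * (1 / (m:ℝ)^2 * Real.cos (2 * π * m * (1/4))))
      (π^2 * (-1/192)) := by
    rw [show (π^2 * (-1/192) : ℝ) = 1/4 * (π^2 * (-1/48)) by ring]; exact h1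
  refine h2.congr_fun fun m => ?_
  unfold f8
  have hc : ((2*m:ℕ):ℝ) = 2*(m:ℝ) := by push_cast; ring
  rw [hc, show 2 * π * (2*(m:ℝ)) * (1/8) = 2 * π * m * (1/4) by ring, mul_pow]
  ring

lemma hodd : HasSum (fun m : ℕ => f8 (2*m+1)) (π^2 / 16) := by
  have hs : Summable (fun m : ℕ => f8 (2*m+1)) :=
    h8.summable.comp_injective (fun m n h => by omega)
  have h := heven.even_add_odd hs.hasSum
  have heq := h8.unique h
  have ht : ∑' m, f8 (2*m+1) = π^2/16 := by linarith
  exact ht ▸ hs.hasSum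

noncomputable def b (m : ℕ) : ℝ := Real.sqrt 2 * f8 (2*m+1)

lemma hb : HasSum b (Real.sqrt 2 * (π^2/16)) := hodd.mul_left _

lemma b_pair (k : ℕ) : b (2*k) + b (2*k+1) = -(a k) := by
  have hs : Real.sqrt 2 * Real.sqrt 2 = 2 := Real.mul_self_sqrt (by norm_num)
  unfold b f8 a
  have e1 : ((2*(2*k)+1:ℕ):ℝ) = 4*(k:ℝ)+1 := by push_cast; ring
  have e2 : ((2*(2*k+1)+1:ℕ):ℝ) = 4*(k:ℝ)+3 := by push_cast; ring
  rw [e1, e2, show 2 * π * (4*(k:ℝ)+1) * (1/8) = (k:ℝ)*π + π/4 by ring,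
    show 2 * π * (4*(k:ℝ)+3) * (1/8) = (k:ℝ)*π + (π - π/4) by ring,
    cos_k_pi_add, cos_k_pi_add, Real.cos_pi_sub, Real.cos_pi_div_four]
  linear_combination ((-1:ℝ)^k * (1/(4*(k:ℝ)+1)^2 - 1/(4*(k:ℝ)+3)^2) / 2) * hs

lemma sum_pair (N : ℕ) : ∑ m ∈ Finset.range (2*N), b m = ∑ k ∈ Finset.range N, (b (2*k) + b (2*k+1)) := by
  induction N with
  | zero => simp
  | succ n ih =>
    rw [show 2*(n+1) = 2*n+1+1 by ring, Finset.sum_range_succ, Finset.sum_range_succ,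
      Finset.sum_range_succ, ih]
    ring

lemma tendsto_a : Tendsto (fun N => ∑ k ∈ Finset.range N, a k) atTop
    (𝓝 (-(Real.sqrt 2 * (π^2/16)))) := by
  have h1 : Tendsto (fun N => ∑ m ∈ Finset.range (2*N), b m) atTop (𝓝 (Real.sqrt 2 * (π^2/16))) :=
    hb.tendsto_sum_nat.comp (tendsto_atTop_mono (f := id) (g := fun N : ℕ => 2*N) (fun n => by simp only [id]; omega) tendsto_id)
  have h2 : ∀ N, ∑ k ∈ Finset.range N, a k = -∑ m ∈ Finset.range (2*N), b m := by
    intro N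
    rw [sum_pair, ← Finset.sum_neg_distrib]
    exact Finset.sum_congr rfl fun k _ => by rw [b_pair k]; ring
  simp only [h2]
  exact h1.neg


noncomputable def f (x : ℝ) : ℝ := Real.log x / (x^4 + 1)
noncomputable def h (u : ℝ) : ℝ := Real.log u * u^2 / (u^4+1)

lemma f_int_Ioi1 : IntegrableOn f (Ioi 1) := by
  refine integrableOn_of_bound f 2 ?_ ?_
  · apply ContinuousOn.div
    · exact Real.continuousOn_log.mono (by intro x hx; simp; exact (lt_trans one_pos hx).ne')
    · fun_prop
    · intro x hx; have : (1:ℝ) < x := hx; positivity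
  · intro u hu
    have hu1 : (1:ℝ) < u := hu
    have hu0 : (0:ℝ) < u := lt_trans one_pos hu1
    have hl : 0 ≤ Real.log u := Real.log_nonneg hu1.le
    rw [f, abs_of_nonneg (by positivity)]
    have e : u^(2+2) = u^4 := by ring
    apply div_le_div_of_nonneg_left hl (by positivity)
    · nlinarith [pow_pos hu0 4]

lemma h_int_Ioi1 : IntegrableOn h (Ioi 1) := by
  refine integrableOn_of_bound h 0 ?_ ?_
  · apply ContinuousOn.div
    · exact (Real.continuousOn_log.mono (by intro x hx; simp; exact (lt_trans one_pos hx).ne')).mul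
        (by fun_prop)
    · fun_prop
    · intro x hx; have : (1:ℝ) < x := hx; positivity
  · intro u hu
    have hu1 : (1:ℝ) < u := hu
    have hu0 : (0:ℝ) < u := lt_trans one_pos hu1
    have hl : 0 ≤ Real.log u := Real.log_nonneg hu1.le
    rw [h, abs_of_nonneg (by positivity)]
    rw [div_le_div_iff₀ (by positivity) (by positivity)]
    have e : u^2 * u^(0+2) = u^4 := by ring
    nlinarith [mul_nonneg hl (pow_pos hu0 4).le]

lemma inv_image : Inv.inv '' (Ioi (1:ℝ)) = Ioo 0 1 := by
  ext x
  constructor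
  · rintro ⟨y, hy, rfl⟩
    have hy1 : (1:ℝ) < y := hy
    have hy0 : (0:ℝ) < y := lt_trans one_pos hy1
    exact ⟨by positivity, by rw [inv_lt_one_iff₀]; right; exact hy1⟩
  · rintro ⟨hx0, hx1⟩
    exact ⟨x⁻¹, by rw [mem_Ioi]; exact (one_lt_inv_iff₀).mpr ⟨hx0, hx1⟩, inv_inv x⟩

lemma hasderiv_inv : ∀ x ∈ Ioi (1:ℝ), HasDerivWithinAt Inv.inv (-(x^2)⁻¹) (Ioi 1) x :=
  fun x hx => (hasDerivAt_inv (lt_trans one_pos hx).ne').hasDerivWithinAt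

lemma transform_eq : ∀ u ∈ Ioi (1:ℝ), |(-(u^2)⁻¹)| • f u⁻¹ = -(h u) := by
  intro u hu
  have hu1 : (1:ℝ) < u := hu
  have hu0 : (0:ℝ) < u := lt_trans one_pos hu1
  have habs : |(-(u^2)⁻¹)| = (u^2)⁻¹ := by rw [abs_neg, abs_inv, abs_of_nonneg (by positivity)]
  rw [habs, f, h, Real.log_inv, smul_eq_mul]
  have h4 : (u:ℝ)^4 + 1 ≠ 0 := by positivity
  field_simp
  ring

lemma subst_integral : ∫ x in Ioo (0:ℝ) 1, f x = -∫ u in Ioi (1:ℝ), h u := by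
  rw [← inv_image, integral_image_eq_integral_abs_deriv_smul measurableSet_Ioi hasderiv_inv
    (inv_injective.injOn) f]
  rw [← MeasureTheory.integral_neg]
  exact setIntegral_congr_fun measurableSet_Ioi (fun u hu => transform_eq u hu)

lemma f_int_Ioo01 : IntegrableOn f (Ioo 0 1) := by
  rw [← inv_image, integrableOn_image_iff_integrableOn_abs_deriv_smul measurableSet_Ioi
    hasderiv_inv (inv_injective.injOn) f]
  exact IntegrableOn.congr_fun h_int_Ioi1.neg
    (fun u hu => by simp only [Pi.neg_apply]; exact (transform_eq u hu).symm) measurableSet_Ioi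

lemma f_int_Ioi0 : IntegrableOn f (Ioi 0) := by
  rw [← Ioo_union_Ici_eq_Ioi (by norm_num : (0:ℝ) < 1)]
  exact f_int_Ioo01.union ((Iff.mpr integrableOn_Ici_iff_integrableOn_Ioi) f_int_Ioi1)

lemma main_eq : ∫ x in Ioi (0:ℝ), f x = ∫ u in Ioi (1:ℝ), G u := by
  rw [← Ioo_union_Ici_eq_Ioi (by norm_num : (0:ℝ) < 1),
    setIntegral_union (by simp [Set.disjoint_left])  measurableSet_Ici
      f_int_Ioo01 ((Iff.mpr integrableOn_Ici_iff_integrableOn_Ioi) f_int_Ioi1),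
    MeasureTheory.integral_Ici_eq_integral_Ioi, subst_integral]
  rw [show -∫ u in Ioi (1:ℝ), h u = (0:ℝ) - ∫ u in Ioi (1:ℝ), h u by ring, sub_add_eq_add_sub,
    zero_add, ← integral_sub f_int_Ioi1 h_int_Ioi1]
  refine setIntegral_congr_fun measurableSet_Ioi (fun u hu => ?_)
  have hu0 : (0:ℝ) < u := lt_trans one_pos hu
  have h4 : (u:ℝ)^4 + 1 ≠ 0 := by positivity
  rw [f, h, G]
  field_simp


theorem stmt_3 :
    MeasureTheory.IntegrableOn (fun x : ℝ => Real.log x / (x^4 + 1)) (Set.Ioi 0) ∧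
    ∫ x in Set.Ioi (0:ℝ), Real.log x / (x^4 + 1) = -(Real.pi^2 / (8 * Real.sqrt 2)) := by
  constructor
  · exact f_int_Ioi0
  · have hI : (∫ u in Ioi (1:ℝ), G u) = -(Real.sqrt 2 * (π^2/16)) :=
      tendsto_nhds_unique tendsto_partial tendsto_a
    have : ∫ x in Set.Ioi (0:ℝ), Real.log x / (x^4 + 1) = ∫ x in Ioi (0:ℝ), f x := rfl
    rw [this, main_eq, hI]
    have hs : Real.sqrt 2 * Real.sqrt 2 = 2 := Real.mul_self_sqrt (by norm_num)
    have : π^2/(8*Real.sqrt 2) = Real.sqrt 2 * (π^2/16) := by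
      rw [div_eq_iff (by positivity : (8:ℝ)*Real.sqrt 2 ≠ 0)]
      linear_combination (-(π^2)/2) * hs
    rw [this]
end

section
/- For every real n > 1, the improper integral ∫₀^∞ (ln x)/(xⁿ + 1) dx converges and equals −(π²/n²)·cot(π/n)·csc(π/n). -/
open MeasureTheory Set Real Filter

lemma aux_cont (n t : ℝ) : ContinuousOn (fun x : ℝ => (1+|Real.log x|) * x^t / (x^n+1)) (Set.Ioi 0) := by
  apply ContinuousOn.div
  · apply ContinuousOn.mul
    · exact continuousOn_const.add (Real.continuousOn_log.mono (fun x hx => ne_of_gt hx)).abs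
    · exact fun x hx => (Real.continuousAt_rpow_const x t (Or.inl (ne_of_gt hx))).continuousWithinAt
  · exact ContinuousOn.add (fun x hx => (Real.continuousAt_rpow_const x n (Or.inl (ne_of_gt hx))).continuousWithinAt) continuousOn_const
  · intro x hx
    have h0 : (0:ℝ) ≤ x ^ n := Real.rpow_nonneg (le_of_lt hx) n
    intro h; linarith [h, h0]

lemma log_le_rpow {x δ : ℝ} (hx : 1 ≤ x) (hδ : 0 < δ) : Real.log x ≤ δ⁻¹ * x ^ δ := by
  have h1 : Real.log x = δ⁻¹ * Real.log (x ^ δ) := by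
    rw [Real.log_rpow (lt_of_lt_of_le one_pos hx)]; field_simp
  rw [h1]
  have h2 : Real.log (x ^ δ) ≤ x ^ δ := le_trans (Real.log_le_sub_one_of_pos (by positivity)) (by linarith)
  exact mul_le_mul_of_nonneg_left h2 (by positivity)

lemma aux_int (n t : ℝ) (hn : 1 < n) (h1 : -1 < t) (h2 : t < n-1) :
    MeasureTheory.IntegrableOn (fun x : ℝ => (1+|Real.log x|) * x^t / (x^n+1)) (Set.Ioi 0) := by
  have key : Set.Ioc (0:ℝ) 1 ∪ Set.Ioi 1 = Set.Ioi 0 := Set.Ioc_union_Ioi_eq_Ioi zero_le_one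
  rw [← key, MeasureTheory.integrableOn_union]
  constructor
  · -- on (0,1]
    set δ := (t+1)/2 with hδdef
    have hδ : 0 < δ := by simp only [hδdef]; linarith
    have hbig : IntegrableOn (fun x : ℝ => x^t + δ⁻¹ * x^(t-δ)) (Set.Ioc 0 1) := by
      apply Integrable.add
      · exact (intervalIntegral.intervalIntegrable_rpow' (by linarith)).1
      · exact ((intervalIntegral.intervalIntegrable_rpow' (r := t - δ)
          (by simp only [hδdef]; linarith)).1).const_mul _
    apply hbig.mono' (((aux_cont n t).mono (Set.Ioc_subset_Ioi_self)).aestronglyMeasurable measurableSet_Ioc)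
    rw [MeasureTheory.ae_restrict_iff' measurableSet_Ioc]
    filter_upwards with x hx
    obtain ⟨hx0, hx1⟩ := hx
    have hxt : (0:ℝ) < x ^ t := Real.rpow_pos_of_pos hx0 t
    have hxn : (0:ℝ) ≤ x ^ n := Real.rpow_nonneg (le_of_lt hx0) n
    have hlog : |Real.log x| ≤ δ⁻¹ * x ^ (-δ) := by
      rw [abs_of_nonpos (Real.log_nonpos (le_of_lt hx0) hx1), ← Real.log_inv]
      have := log_le_rpow (x := x⁻¹) ((one_le_inv₀ hx0).mpr hx1) hδ
      rwa [Real.inv_rpow (le_of_lt hx0), ← Real.rpow_neg (le_of_lt hx0)] at this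
    have hnorm : ‖(1+|Real.log x|) * x^t / (x^n+1)‖ = (1+|Real.log x|) * x^t / (x^n+1) := by
      rw [Real.norm_eq_abs, abs_of_nonneg]; positivity
    rw [hnorm]
    have step1 : (1+|Real.log x|) * x^t / (x^n+1) ≤ (1+|Real.log x|) * x^t :=
      div_le_self (by positivity) (by linarith)
    refine le_trans step1 ?_
    have : (1+|Real.log x|) * x^t ≤ (1 + δ⁻¹ * x^(-δ)) * x^t := by
      apply mul_le_mul_of_nonneg_right (by linarith) (le_of_lt hxt)
    refine le_trans this (le_of_eq ?_)
    rw [add_mul, one_mul, mul_assoc, ← Real.rpow_add hx0]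
    ring_nf
  · -- on (1,∞)
    set δ := (n-1-t)/2 with hδdef
    have hδ : 0 < δ := by simp only [hδdef]; linarith
    have hbig : IntegrableOn (fun x : ℝ => x^(t-n) + δ⁻¹ * x^(t-n+δ)) (Set.Ioi 1) := by
      apply Integrable.add
      · exact integrableOn_Ioi_rpow_of_lt (by linarith) one_pos
      · exact (integrableOn_Ioi_rpow_of_lt (a := t-n+δ) (by simp only [hδdef]; linarith) one_pos).const_mul _
    apply hbig.mono' (((aux_cont n t).mono (Set.Ioi_subset_Ioi zero_le_one)).aestronglyMeasurable measurableSet_Ioi)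
    rw [MeasureTheory.ae_restrict_iff' measurableSet_Ioi]
    filter_upwards with x hx1
    have hx0 : (0:ℝ) < x := lt_trans one_pos hx1
    have hxt : (0:ℝ) < x ^ t := Real.rpow_pos_of_pos hx0 t
    have hxn : (0:ℝ) < x ^ n := Real.rpow_pos_of_pos hx0 n
    have hlog : |Real.log x| ≤ δ⁻¹ * x ^ δ := by
      rw [abs_of_nonneg (Real.log_nonneg (le_of_lt hx1))]
      exact log_le_rpow (le_of_lt hx1) hδ
    have hnorm : ‖(1+|Real.log x|) * x^t / (x^n+1)‖ = (1+|Real.log x|) * x^t / (x^n+1) := by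
      rw [Real.norm_eq_abs, abs_of_nonneg]; positivity
    rw [hnorm]
    have step1 : (1+|Real.log x|) * x^t / (x^n+1) ≤ (1+|Real.log x|) * x^t / x^n := by
      apply div_le_div_of_nonneg_left (by positivity) hxn (by linarith)
    refine le_trans step1 ?_
    have step2 : (1+|Real.log x|) * x^t / x^n ≤ (1 + δ⁻¹ * x^δ) * x^t / x^n := by
      gcongr
    refine le_trans step2 (le_of_eq ?_)
    rw [add_mul, one_mul, mul_assoc, ← Real.rpow_add hx0, add_div, ← Real.rpow_sub hx0,
      mul_div_assoc, ← Real.rpow_sub hx0]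
    ring_nf

lemma beta_real (a : ℝ) (h0 : 0 < a) (h1 : a < 1) :
    ∫ t in Set.Ioo (0:ℝ) 1, t^(a-1) * (1-t)^(-a) = π / Real.sin (π * a) := by
  have hc : Complex.Gamma a * Complex.Gamma (1-a) = Complex.Gamma (a + (1-a)) *
      Complex.betaIntegral a (1-a) := by
    apply Complex.Gamma_mul_Gamma_eq_betaIntegral <;> simp [h0, h1] <;> linarith
  rw [show (a:ℂ) + (1-a) = 1 by ring, Complex.Gamma_one, one_mul] at hc
  have hG : Complex.Gamma (a:ℂ) * Complex.Gamma (1-(a:ℂ)) = ((π / Real.sin (π * a) : ℝ) : ℂ) := by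
    rw [show (1:ℂ) - a = ((1 - a : ℝ) : ℂ) by push_cast; ring, Complex.Gamma_ofReal,
      Complex.Gamma_ofReal, ← Complex.ofReal_mul, Real.Gamma_mul_Gamma_one_sub]
  have hbeta : Complex.betaIntegral a (1-a) =
      ((∫ t in (0:ℝ)..1, t^(a-1) * (1-t)^(-a) : ℝ) : ℂ) := by
    rw [Complex.betaIntegral, ← intervalIntegral.integral_ofReal]
    apply intervalIntegral.integral_congr
    intro x hx
    rw [Set.uIcc_of_le zero_le_one] at hx
    obtain ⟨hx0, hx1⟩ := hx
    show (x:ℂ) ^ ((a:ℂ) - 1) * (1 - (x:ℂ)) ^ ((1:ℂ) - a - 1) = ((x ^ (a - 1) * (1 - x) ^ (-a) : ℝ) : ℂ)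
    rw [Complex.ofReal_mul, Complex.ofReal_cpow hx0, Complex.ofReal_cpow (show (0:ℝ) ≤ 1 - x by linarith)]
    push_cast
    norm_num
  rw [hbeta, hG] at hc
  have := Complex.ofReal_inj.mp hc.symm
  rw [← this, intervalIntegral.integral_of_le zero_le_one,
    MeasureTheory.integral_Ioc_eq_integral_Ioo]

lemma mellin_int (a : ℝ) (h0 : 0 < a) (h1 : a < 1) :
    ∫ x in Set.Ioi (0:ℝ), x^(a-1) / (1+x) = π / Real.sin (π * a) := by
  have himg : (fun t : ℝ => t / (1-t)) '' Set.Ioo 0 1 = Set.Ioi 0 := by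
    ext y
    simp only [Set.mem_image, Set.mem_Ioo, Set.mem_Ioi]
    constructor
    · rintro ⟨t, ⟨ht0, ht1⟩, rfl⟩
      have : (0:ℝ) < 1 - t := by linarith
      positivity
    · intro hy
      refine ⟨y / (1+y), ⟨by positivity, by rw [div_lt_one (by linarith)]; linarith⟩, ?_⟩
      have h1y : (0:ℝ) < 1 + y := by linarith
      field_simp
      ring
  have hderiv : ∀ t ∈ Set.Ioo (0:ℝ) 1, HasDerivWithinAt (fun t : ℝ => t / (1-t))
      (((1-t)^2)⁻¹) (Set.Ioo 0 1) t := by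
    intro t ht
    have ht1 : (1:ℝ) - t ≠ 0 := by simp only [Set.mem_Ioo] at ht; intro h; linarith [ht.2]
    have : HasDerivAt (fun t : ℝ => t / (1-t)) (((1-t)^2)⁻¹) t := by
      have := (hasDerivAt_id t).div ((hasDerivAt_id t).const_sub 1) ht1
      refine this.congr_deriv ?_
      simp only [id]
      field_simp
      ring
    exact this.hasDerivWithinAt
  have hinj : Set.InjOn (fun t : ℝ => t / (1-t)) (Set.Ioo 0 1) := by
    intro t1 h1' t2 h2' h
    simp only [Set.mem_Ioo] at h1' h2'
    have e1 : (1:ℝ) - t1 ≠ 0 := by intro hh; linarith [h1'.2]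
    have e2 : (1:ℝ) - t2 ≠ 0 := by intro hh; linarith [h2'.2]
    field_simp at h
    linarith
  have := MeasureTheory.integral_image_eq_integral_abs_deriv_smul measurableSet_Ioo hderiv hinj
    (fun x => x^(a-1) / (1+x))
  rw [himg] at this
  rw [this, ← beta_real a h0 h1]
  apply MeasureTheory.setIntegral_congr_fun measurableSet_Ioo
  intro t ht
  obtain ⟨ht0, ht1⟩ := ht
  have h1t : (0:ℝ) < 1 - t := by linarith
  have hft : (0:ℝ) < t / (1-t) := by positivity
  have hden : 1 + t / (1-t) = (1-t)⁻¹ := by field_simp; ring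
  simp only [smul_eq_mul]
  rw [hden]
  have e1 : (1-t)^(a-1) = (1-t)^a / (1-t) := by rw [Real.rpow_sub h1t, Real.rpow_one]
  have e2 : (t/(1-t))^(a-1) = t^(a-1) / (1-t)^(a-1) :=
    Real.div_rpow (le_of_lt ht0) (le_of_lt h1t) _
  rw [e2, e1, Real.rpow_neg (le_of_lt h1t) a]
  have hpa : (0:ℝ) < (1-t)^a := Real.rpow_pos_of_pos h1t a
  rw [abs_of_pos (by positivity)]
  field_simp

lemma F_closed (n s : ℝ) (hn : 1 < n) (h1 : -1 < s) (h2 : s < n-1) :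
    ∫ x in Set.Ioi (0:ℝ), x^s / (x^n+1) = (π/n) / Real.sin (π * ((s+1)/n)) := by
  have hn0 : (0:ℝ) < n := by linarith
  have hs1 : (0:ℝ) < s + 1 := by linarith
  have ha0 : 0 < (s+1)/n := by positivity
  have ha1 : (s+1)/n < 1 := by rw [div_lt_one hn0]; linarith
  have key := MeasureTheory.integral_comp_rpow_Ioi
    (fun y : ℝ => y^((s+1)/n - 1) / (1+y)) (p := n) (ne_of_gt hn0)
  rw [mellin_int _ ha0 ha1] at key
  have congr1 : ∫ x in Set.Ioi (0:ℝ), (|n| * x ^ (n - 1)) •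
      ((x^n)^((s+1)/n - 1) / (1+x^n)) = ∫ x in Set.Ioi (0:ℝ), n * (x^s / (x^n+1)) := by
    apply MeasureTheory.setIntegral_congr_fun measurableSet_Ioi
    intro x hx
    have hx0 : (0:ℝ) < x := hx
    simp only [smul_eq_mul, abs_of_pos hn0]
    have e1 : (x^n)^((s+1)/n - 1) = x^(s+1-n) := by
      rw [← Real.rpow_mul (le_of_lt hx0)]
      congr 1
      field_simp
    rw [e1, add_comm (1:ℝ) (x^n)]
    rw [show n * x^(n-1) * (x^(s+1-n) / (x^n+1)) = n * (x^(n-1) * x^(s+1-n) / (x^n+1)) by ring,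
      ← Real.rpow_add hx0]
    norm_num
  rw [congr1, MeasureTheory.integral_const_mul] at key
  apply mul_left_cancel₀ (ne_of_gt hn0)
  rw [key]
  rw [show n * ((π/n) / Real.sin (π * ((s+1)/n))) = n*(π/n) / Real.sin (π * ((s+1)/n)) by ring]
  rw [mul_div_cancel₀ _ (ne_of_gt hn0)]

theorem stmt_4 (n : ℝ) (hn : 1 < n) :
    MeasureTheory.IntegrableOn (fun x : ℝ => Real.log x / (x ^ n + 1)) (Set.Ioi 0) ∧
    ∫ x in Set.Ioi (0:ℝ), Real.log x / (x ^ n + 1) =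
      -(Real.pi^2 / n^2) * (Real.cos (Real.pi / n) / Real.sin (Real.pi / n)) *
        (1 / Real.sin (Real.pi / n)) := by
  have hn0 : (0:ℝ) < n := by linarith
  set ε : ℝ := min 1 (n-1) / 2 with hεdef
  have hε : 0 < ε := by
    have : (0:ℝ) < min 1 (n-1) := lt_min one_pos (by linarith)
    simp only [hεdef]; linarith
  have hε1 : ε < 1 := by
    have : min 1 (n-1) ≤ 1 := min_le_left _ _
    simp only [hεdef]; linarith
  have hε2 : ε < n - 1 := by
    have h := min_le_right (1:ℝ) (n-1)
    have : (0:ℝ) < n - 1 := by linarith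
    simp only [hεdef]; linarith
  -- continuity helpers
  have hcont_pow : ∀ s : ℝ, ContinuousOn (fun x : ℝ => x^s) (Set.Ioi 0) :=
    fun s x hx => (Real.continuousAt_rpow_const x s (Or.inl (ne_of_gt hx))).continuousWithinAt
  have hden_ne : ∀ x : ℝ, 0 < x → x^n + 1 ≠ 0 := by
    intro x hx
    have := Real.rpow_nonneg (le_of_lt hx) n
    intro h; linarith
  have hcont_den : ContinuousOn (fun x : ℝ => x^n + 1) (Set.Ioi 0) :=
    (hcont_pow n).add continuousOn_const
  have hcont_F : ∀ s : ℝ, ContinuousOn (fun x : ℝ => x^s/(x^n+1)) (Set.Ioi 0) :=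
    fun s => (hcont_pow s).div hcont_den (fun x hx => hden_ne x hx)
  have hcont_F' : ∀ s : ℝ, ContinuousOn (fun x : ℝ => Real.log x * x^s/(x^n+1)) (Set.Ioi 0) :=
    fun s => (((Real.continuousOn_log.mono (fun x hx => ne_of_gt hx)).mul
      (hcont_pow s)).div hcont_den (fun x hx => hden_ne x hx))
  -- the dominated derivative theorem
  have main := hasDerivAt_integral_of_dominated_loc_of_deriv_le (𝕜 := ℝ)
    (μ := volume.restrict (Set.Ioi (0:ℝ)))
    (F := fun s x => x^s/(x^n+1)) (F' := fun s x => Real.log x * x^s/(x^n+1)) (x₀ := 0)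
    (bound := fun x => (1+|Real.log x|) * x^(-ε)/(x^n+1) + (1+|Real.log x|) * x^ε/(x^n+1))
    (Metric.ball_mem_nhds (0:ℝ) hε)
    (Filter.Eventually.of_forall (fun s =>
      ((hcont_F s).aestronglyMeasurable measurableSet_Ioi)))
    ?hFint
    ((hcont_F' 0).aestronglyMeasurable measurableSet_Ioi)
    ?hbound
    ?hboundint
    ?hdiff
  case hFint =>
    apply (aux_int n 0 hn (by norm_num) (by linarith)).mono'
      ((hcont_F 0).aestronglyMeasurable measurableSet_Ioi)
    rw [MeasureTheory.ae_restrict_iff' measurableSet_Ioi]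
    filter_upwards with x hx
    have hx0 : (0:ℝ) < x := hx
    have hd : (0:ℝ) < x^n + 1 := by
      have := Real.rpow_nonneg (le_of_lt hx0) n; linarith
    have hp : (0:ℝ) < x^(0:ℝ) := Real.rpow_pos_of_pos hx0 0
    rw [Real.norm_eq_abs, abs_of_nonneg (by positivity)]
    gcongr
    nlinarith [mul_nonneg (abs_nonneg (Real.log x)) (le_of_lt hp), hp]
  case hbound =>
    rw [MeasureTheory.ae_restrict_iff' measurableSet_Ioi]
    filter_upwards with x hx
    intro s hs
    have hx0 : (0:ℝ) < x := hx
    rw [Real.ball_eq_Ioo] at hs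
    obtain ⟨hs1, hs2⟩ := hs
    rw [zero_sub] at hs1; rw [zero_add] at hs2
    have hd : (0:ℝ) < x^n + 1 := by
      have := Real.rpow_nonneg (le_of_lt hx0) n; linarith
    have hxs : x^s ≤ x^(-ε) + x^ε := by
      rcases le_or_gt 1 x with h | h
      · have h1 : x^s ≤ x^ε := Real.rpow_le_rpow_of_exponent_le h (le_of_lt hs2)
        have h2 : (0:ℝ) ≤ x^(-ε) := Real.rpow_nonneg (le_of_lt hx0) _
        linarith
      · have h1 : x^s ≤ x^(-ε) := Real.rpow_le_rpow_of_exponent_ge hx0 (le_of_lt h) (by linarith)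
        have h2 : (0:ℝ) ≤ x^ε := Real.rpow_nonneg (le_of_lt hx0) _
        linarith
    rw [Real.norm_eq_abs, abs_div, abs_mul, abs_of_pos (Real.rpow_pos_of_pos hx0 s),
      abs_of_pos hd]
    rw [← add_div]
    gcongr
    nlinarith [abs_nonneg (Real.log x), Real.rpow_pos_of_pos hx0 (-ε), Real.rpow_pos_of_pos hx0 ε,
      Real.rpow_pos_of_pos hx0 s]
  case hboundint =>
    exact ((aux_int n (-ε) hn (by linarith) (by linarith)).add
      (aux_int n ε hn (by linarith) (by linarith)))
  case hdiff =>
    rw [MeasureTheory.ae_restrict_iff' measurableSet_Ioi]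
    filter_upwards with x hx
    intro s _
    have hx0 : (0:ℝ) < x := hx
    have := ((Real.hasStrictDerivAt_const_rpow hx0 s).hasDerivAt).div_const (x^n+1)
    refine this.congr_deriv ?_
    ring
  obtain ⟨hint, hder⟩ := main
  simp only [Real.rpow_zero, mul_one] at hint hder
  refine ⟨hint, ?_⟩
  -- identify with closed form
  have heq : (fun s : ℝ => (π/n) / Real.sin (π * ((s+1)/n))) =ᶠ[nhds (0:ℝ)]
      (fun s : ℝ => ∫ x in Set.Ioi (0:ℝ), x^s/(x^n+1)) := by
    filter_upwards [Ioo_mem_nhds (show (-1:ℝ) < 0 by norm_num) (show (0:ℝ) < n-1 by linarith)]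
      with s hs
    exact (F_closed n s hn hs.1 hs.2).symm
  have hderG : HasDerivAt (fun s : ℝ => (π/n) / Real.sin (π * ((s+1)/n)))
      (∫ x in Set.Ioi (0:ℝ), Real.log x/(x^n+1)) 0 := hder.congr_of_eventuallyEq heq
  -- compute derivative of the closed form directly
  have hsin_pos : 0 < Real.sin (π/n) := by
    apply Real.sin_pos_of_pos_of_lt_pi
    · positivity
    · rw [div_lt_iff₀ hn0]; nlinarith [Real.pi_pos]
  have h1 : HasDerivAt (fun s : ℝ => π * ((s+1)/n)) (π/n) 0 := by
    have := (((hasDerivAt_id (0:ℝ)).add_const 1).div_const n).const_mul π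
    refine this.congr_deriv ?_
    field_simp
  have h2 : HasDerivAt (fun s : ℝ => Real.sin (π * ((s+1)/n)))
      (Real.cos (π/n) * (π/n)) 0 := by
    have := (Real.hasDerivAt_sin (π * ((0+1)/n))).comp 0 h1
    refine this.congr_deriv ?_ <;> norm_num [div_eq_mul_inv]
  have hne : Real.sin (π * ((0+1)/n)) ≠ 0 := by
    rw [show π * (((0:ℝ)+1)/n) = π/n by rw [zero_add, mul_one_div]]
    exact ne_of_gt hsin_pos
  have h3 : HasDerivAt (fun s : ℝ => (Real.sin (π * ((s+1)/n)))⁻¹)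
      (-(Real.cos (π/n) * (π/n)) / (Real.sin (π/n))^2) 0 := by
    have := h2.inv hne
    refine this.congr_deriv ?_ <;> norm_num [div_eq_mul_inv]
  have h4 : HasDerivAt (fun s : ℝ => (π/n) / Real.sin (π * ((s+1)/n)))
      ((π/n) * (-(Real.cos (π/n) * (π/n)) / (Real.sin (π/n))^2)) 0 := by
    simp only [div_eq_mul_inv]
    exact h3.const_mul _
  have := h4.unique hderG
  rw [← this]
  field_simp
end

section
/- The limit as n → +∞ (n real, n > 1) of ∫₀^∞ (ln x)/(xⁿ + 1) dx equals −1. -/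
open MeasureTheory Real Set Filter intervalIntegral
open scoped Topology

/-- bound for `log` near zero -/
lemma aux_abs_log_le {x : ℝ} (hx : 0 < x) (hx1 : x ≤ 1) :
    |Real.log x| ≤ 2 * x ^ (-(1/2) : ℝ) := by
  have hp : (0:ℝ) < x ^ (-(1/2) : ℝ) := Real.rpow_pos_of_pos hx _
  have h := Real.log_le_sub_one_of_pos hp
  rw [Real.log_rpow hx] at h
  rw [abs_of_nonpos (Real.log_nonpos hx.le hx1)]
  linarith

/-- bound for `log` at infinity -/
lemma aux_log_le {x : ℝ} (hx : 1 < x) : Real.log x ≤ 2 * x ^ ((1/2) : ℝ) := by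
  have hx0 : (0:ℝ) < x := by linarith
  have hp : (0:ℝ) < x ^ ((1/2) : ℝ) := Real.rpow_pos_of_pos hx0 _
  have h := Real.log_le_sub_one_of_pos hp
  rw [Real.log_rpow hx0] at h
  linarith

lemma aux_int_log : IntegrableOn Real.log (Ioc (0:ℝ) 1) := by
  have hg : IntegrableOn (fun x : ℝ => 2 * x ^ (-(1/2) : ℝ)) (Ioc (0:ℝ) 1) := by
    have := (intervalIntegral.intervalIntegrable_rpow' (a := 0) (b := 1)
      (r := -(1/2)) (by norm_num))
    rw [intervalIntegrable_iff_integrableOn_Ioc_of_le (by norm_num)] at this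
    exact this.const_mul 2
  refine hg.mono' (Real.measurable_log.aestronglyMeasurable) ?_
  rw [ae_restrict_iff' measurableSet_Ioc]
  refine ae_of_all _ fun x hx => ?_
  have h := aux_abs_log_le hx.1 hx.2
  have hp : (0:ℝ) < x ^ (-(1/2) : ℝ) := Real.rpow_pos_of_pos hx.1 _
  simpa using h

lemma aux_int_tail : IntegrableOn (fun x : ℝ => Real.log x / x ^ (2:ℝ)) (Ioi (1:ℝ)) := by
  have hg : IntegrableOn (fun x : ℝ => 2 * x ^ (-(3/2) : ℝ)) (Ioi (1:ℝ)) :=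
    (integrableOn_Ioi_rpow_of_lt (by norm_num) one_pos).const_mul 2
  refine hg.mono' ?_ ?_
  · refine (ContinuousOn.div ?_ ?_ ?_).aestronglyMeasurable measurableSet_Ioi
    · exact Real.continuousOn_log.mono fun x hx => by
        simp only [mem_compl_iff, mem_singleton_iff]
        intro h; rw [h] at hx; exact absurd hx (by simp)
    · exact fun x hx => (Real.continuousAt_rpow_const x 2
        (Or.inl (by simp at hx; positivity))).continuousWithinAt
    · intro x hx
      have : (0:ℝ) < x := lt_trans one_pos hx
      positivity
  · rw [ae_restrict_iff' measurableSet_Ioi]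
    refine ae_of_all _ fun x hx => ?_
    simp only [mem_Ioi] at hx
    have hx0 : (0:ℝ) < x := lt_trans one_pos hx
    have hlog : 0 ≤ Real.log x := Real.log_nonneg hx.le
    have hp2 : (0:ℝ) < x ^ (2:ℝ) := Real.rpow_pos_of_pos hx0 _
    rw [Real.norm_eq_abs, abs_of_nonneg (by positivity)]
    have h1 : Real.log x / x ^ (2:ℝ) ≤ (2 * x ^ ((1/2):ℝ)) / x ^ (2:ℝ) := by
      gcongr
      exact aux_log_le hx
    calc Real.log x / x ^ (2:ℝ) ≤ (2 * x ^ ((1/2):ℝ)) / x ^ (2:ℝ) := h1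
      _ = 2 * x ^ (-(3/2) : ℝ) := by
          rw [mul_div_assoc, ← Real.rpow_sub hx0]; norm_num

lemma aux_integral_log : ∫ x in Ioc (0:ℝ) 1, Real.log x = -1 := by
  have ha : Tendsto (fun n : ℕ => 1 / ((n:ℝ) + 1)) atTop (𝓝 0) :=
    tendsto_one_div_add_atTop_nhds_zero_nat
  have hcover : AECover ((volume : Measure ℝ).restrict (Ioc (0:ℝ) 1)) atTop
      (fun n : ℕ => Ioc (1 / ((n:ℝ) + 1)) 1) :=
    aecover_Ioc_of_Ioc ha tendsto_const_nhds
  have h1 := hcover.integral_tendsto_of_countably_generated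
    (f := Real.log) aux_int_log
  -- rewrite each term
  have heq : ∀ n : ℕ, (∫ x in Ioc (1 / ((n:ℝ) + 1)) 1, Real.log x
      ∂((volume : Measure ℝ).restrict (Ioc (0:ℝ) 1)))
      = -1 - (1 / ((n:ℝ) + 1)) * Real.log (1 / ((n:ℝ) + 1)) + 1 / ((n:ℝ) + 1) := by
    intro n
    have hn0 : (0:ℝ) < 1 / ((n:ℝ) + 1) := by positivity
    have hn1 : 1 / ((n:ℝ) + 1) ≤ 1 := by
      rw [div_le_one (by positivity)]; linarith [Nat.cast_nonneg (α := ℝ) n]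
    rw [Measure.restrict_restrict measurableSet_Ioc,
      inter_eq_self_of_subset_left (Ioc_subset_Ioc hn0.le le_rfl)]
    have := integral_log (a := 1 / ((n:ℝ) + 1)) (b := 1)
    rw [integral_of_le hn1] at this
    rw [this]; simp; ring
  rw [funext heq] at h1
  have h2 : Tendsto (fun n : ℕ =>
      -1 - (1 / ((n:ℝ) + 1)) * Real.log (1 / ((n:ℝ) + 1)) + 1 / ((n:ℝ) + 1)) atTop (𝓝 (-1)) := by
    have hmul : Tendsto (fun n : ℕ => (1 / ((n:ℝ) + 1)) * Real.log (1 / ((n:ℝ) + 1)))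
        atTop (𝓝 0) := by
      have h0 : Tendsto (fun x : ℝ => x * Real.log x) (𝓝 0) (𝓝 0) := by
        simpa using Real.continuous_mul_log.tendsto 0
      exact h0.comp ha
    have := ((tendsto_const_nhds (x := (-1:ℝ))).sub hmul).add ha
    simpa using this
  exact tendsto_nhds_unique h1 h2

noncomputable def auxF (x : ℝ) : ℝ := if x ≤ 1 then Real.log x else 0
noncomputable def auxG (x : ℝ) : ℝ := if x ≤ 1 then -Real.log x else Real.log x / x ^ (2:ℝ)

lemma aux_hIoi : Ioi (0:ℝ) = Ioc 0 1 ∪ Ioi 1 := (Set.Ioc_union_Ioi_eq_Ioi (by norm_num)).symm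

lemma auxF_int1 : IntegrableOn auxF (Ioc (0:ℝ) 1) :=
  IntegrableOn.congr_fun aux_int_log (fun x hx => by simp [auxF, hx.2]) measurableSet_Ioc

lemma auxF_int2 : IntegrableOn auxF (Ioi (1:ℝ)) :=
  IntegrableOn.congr_fun (integrableOn_zero) (fun x hx => by
    simp only [mem_Ioi] at hx; simp [auxF, not_le.2 hx]) measurableSet_Ioi

lemma auxG_int : IntegrableOn auxG (Ioi (0:ℝ)) := by
  rw [aux_hIoi]
  refine IntegrableOn.union ?_ ?_
  · exact IntegrableOn.congr_fun aux_int_log.neg (fun x hx => by simp [auxG, hx.2])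
      measurableSet_Ioc
  · exact IntegrableOn.congr_fun aux_int_tail (fun x hx => by
      simp only [mem_Ioi] at hx; simp [auxG, not_le.2 hx]) measurableSet_Ioi

lemma aux_meas (n : ℝ) : AEStronglyMeasurable (fun x : ℝ => Real.log x / (x ^ n + 1))
    ((volume : Measure ℝ).restrict (Ioi 0)) := by
  refine (ContinuousOn.div ?_ ?_ ?_).aestronglyMeasurable measurableSet_Ioi
  · exact Real.continuousOn_log.mono fun x hx => by
      simp only [mem_compl_iff, mem_singleton_iff]
      intro h; rw [h] at hx; exact absurd hx (by simp)
  · exact fun x hx => ((Real.continuousAt_rpow_const x n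
      (Or.inl (ne_of_gt hx))).continuousWithinAt).add continuousWithinAt_const
  · intro x hx
    have h0 : (0:ℝ) ≤ x ^ n := Real.rpow_nonneg (le_of_lt hx) n
    positivity

lemma aux_bound : ∀ᶠ n : ℝ in atTop, ∀ᵐ x ∂((volume : Measure ℝ).restrict (Ioi 0)),
    ‖Real.log x / (x ^ n + 1)‖ ≤ auxG x := by
  filter_upwards [eventually_ge_atTop (2:ℝ)] with n hn
  rw [ae_restrict_iff' measurableSet_Ioi]
  refine ae_of_all _ fun x hx => ?_
  simp only [mem_Ioi] at hx
  have hxp : (0:ℝ) ≤ x ^ n := Real.rpow_nonneg hx.le n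
  have hden : (0:ℝ) < x ^ n + 1 := by linarith
  rcases le_or_gt x 1 with hx1 | hx1
  · have h : ‖Real.log x / (x ^ n + 1)‖ ≤ |Real.log x| := by
      rw [Real.norm_eq_abs, abs_div, abs_of_pos hden]
      exact div_le_self (abs_nonneg _) (by linarith)
    calc ‖Real.log x / (x ^ n + 1)‖ ≤ |Real.log x| := h
      _ = auxG x := by
          rw [auxG]; simp only [if_pos hx1]
          exact abs_of_nonpos (Real.log_nonpos hx.le hx1)
  · have hlog : 0 ≤ Real.log x := Real.log_nonneg hx1.le
    have h2n : x ^ (2:ℝ) ≤ x ^ n := Real.rpow_le_rpow_of_exponent_le hx1.le hn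
    have hp2 : (0:ℝ) < x ^ (2:ℝ) := Real.rpow_pos_of_pos hx _
    rw [Real.norm_eq_abs, abs_of_nonneg (by positivity), auxG]
    simp only [if_neg (not_le.2 hx1)]
    gcongr
    linarith

lemma aux_lim : ∀ᵐ x ∂((volume : Measure ℝ).restrict (Ioi 0)),
    Tendsto (fun n : ℝ => Real.log x / (x ^ n + 1)) atTop (𝓝 (auxF x)) := by
  rw [ae_restrict_iff' measurableSet_Ioi]
  refine ae_of_all _ fun x hx => ?_
  simp only [mem_Ioi] at hx
  rcases lt_trichotomy x 1 with hx1 | hx1 | hx1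
  · have hpow : Tendsto (fun n : ℝ => x ^ n) atTop (𝓝 0) :=
      tendsto_rpow_atTop_of_base_lt_one x (by linarith) hx1
    have h : Tendsto (fun n : ℝ => Real.log x / (x ^ n + 1)) atTop
        (𝓝 (Real.log x / (0 + 1))) :=
      tendsto_const_nhds.div (hpow.add tendsto_const_nhds) (by norm_num)
    simpa [auxF, hx1.le] using h
  · subst hx1
    simp only [auxF, Real.log_one, zero_div, if_pos le_rfl]
    exact tendsto_const_nhds
  · have hpow : Tendsto (fun n : ℝ => x ^ n) atTop atTop := by
      have hlog : 0 < Real.log x := Real.log_pos hx1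
      have h1 : Tendsto (fun n : ℝ => Real.log x * n) atTop atTop :=
        (tendsto_const_mul_atTop_of_pos hlog).mpr tendsto_id
      refine (Real.tendsto_exp_atTop.comp h1).congr fun n => ?_
      simp [Real.rpow_def_of_pos (lt_trans one_pos hx1), Function.comp]
    have h : Tendsto (fun n : ℝ => Real.log x / (x ^ n + 1)) atTop (𝓝 0) :=
      Tendsto.div_atTop tendsto_const_nhds (tendsto_atTop_add_const_right _ 1 hpow)
    simpa [auxF, not_le.2 hx1] using h

lemma auxF_integral : ∫ x in Ioi (0:ℝ), auxF x = -1 := by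
  rw [aux_hIoi, setIntegral_union (Set.Ioc_disjoint_Ioi le_rfl) measurableSet_Ioi
    auxF_int1 auxF_int2]
  have e1 : ∫ x in Ioc (0:ℝ) 1, auxF x = ∫ x in Ioc (0:ℝ) 1, Real.log x :=
    setIntegral_congr_fun measurableSet_Ioc fun x hx => by simp [auxF, hx.2]
  have e2 : ∫ x in Ioi (1:ℝ), auxF x = 0 := by
    rw [setIntegral_congr_fun measurableSet_Ioi (g := fun _ => (0:ℝ))
      (fun x hx => by simp only [mem_Ioi] at hx; simp [auxF, not_le.2 hx])]
    simp
  rw [e1, e2, aux_integral_log]; ring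

theorem stmt_6 :
    Filter.Tendsto
      (fun n : ℝ => ∫ x in Set.Ioi (0:ℝ), Real.log x / (x ^ n + 1))
      Filter.atTop (nhds (-1)) := by
  have key : Tendsto (fun n : ℝ => ∫ x in Set.Ioi (0:ℝ), Real.log x / (x ^ n + 1))
      atTop (𝓝 (∫ x in Ioi (0:ℝ), auxF x)) := by
    refine tendsto_integral_filter_of_dominated_convergence auxG ?_ ?_ ?_ ?_
    · exact Eventually.of_forall aux_meas
    · exact aux_bound
    · exact auxG_int
    · exact aux_lim
  rwa [auxF_integral] at key
end

section
/- For every real z with 0 < z < 1, ∫_{−∞}^{0} t·e^{−z t}/(1 − e^{−t}) dt = ψ¹(1 − z), where ψ¹ is the trigamma function. -/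
open MeasureTheory Set Real

noncomputable def trigamma (z : ℝ) : ℝ := ∑' k : ℕ, 1 / (z + k)^2

lemma intA {a : ℝ} (ha : 0 < a) :
    ∫ t in Set.Ioi (0:ℝ), t * Real.exp (-(a*t)) = 1/a^2 := by
  have h := Real.integral_rpow_mul_exp_neg_mul_Ioi (a := 2) (r := a) two_pos ha
  rw [show (2:ℝ)-1 = 1 by norm_num] at h
  simp_rw [Real.rpow_one] at h
  rw [h, Real.Gamma_two, mul_one, show ((2:ℝ)) = ((2:ℕ):ℝ) by norm_num,
    Real.rpow_natCast, div_pow, one_pow]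

lemma intF {a : ℝ} (ha : 0 < a) :
    IntegrableOn (fun t : ℝ => t * Real.exp (-(a*t))) (Set.Ioi 0) := by
  have h := integrableOn_rpow_mul_exp_neg_mul_rpow (s := 1) (p := 1) (b := a)
    (by norm_num) one_pos ha
  simpa [Real.rpow_one] using h

theorem stmt_9 (z : ℝ) (h0 : 0 < z) (h1 : z < 1) :
    ∫ t in Set.Iio (0:ℝ), t * Real.exp (-z * t) / (1 - Real.exp (-t)) = trigamma (1 - z) := by
  have hz : 0 < 1 - z := by linarith
  set F : ℕ → ℝ → ℝ := fun k s => s * Real.exp (-(((k:ℝ)+1-z)*s)) with hFdef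
  have hak : ∀ k : ℕ, 0 < (k:ℝ)+1-z := by
    intro k; have : (0:ℝ) ≤ k := Nat.cast_nonneg k; linarith
  -- value of each integral
  have hval : ∀ k : ℕ, ∫ s in Set.Ioi (0:ℝ), F k s = 1/((k:ℝ)+1-z)^2 := fun k => intA (hak k)
  -- summability of the values
  have hsum : Summable (fun k : ℕ => 1/((k:ℝ)+1-z)^2) := by
    have hs1 : Summable (fun k : ℕ => 1/((k:ℝ)+1)^2) := by
      have h2 : Summable (fun n : ℕ => 1/(n:ℝ)^2) :=
        Real.summable_one_div_nat_pow.mpr (by norm_num)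
      have := (summable_nat_add_iff 1).mpr h2
      simpa [Nat.cast_add] using this
    apply Summable.of_nonneg_of_le (fun k => by positivity)
      (fun k => ?_) (hs1.mul_left (1/(1-z)^2))
    have hk : (0:ℝ) ≤ k := Nat.cast_nonneg k
    have hpos : 0 < (1-z)*((k:ℝ)+1) := by nlinarith
    have hle : (1-z)*((k:ℝ)+1) ≤ (k:ℝ)+1-z := by nlinarith
    calc 1/((k:ℝ)+1-z)^2 ≤ 1/(((1-z)*((k:ℝ)+1))^2) := by
          apply one_div_le_one_div_of_le (by positivity)
          exact pow_le_pow_left₀ hpos.le hle 2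
      _ = 1/(1-z)^2 * (1/((k:ℝ)+1)^2) := by rw [mul_pow, one_div_mul_one_div]
  have h0' := integral_comp_neg_Ioi (0:ℝ) (fun t => t * Real.exp (-z*t)/(1-Real.exp (-t)))
  rw [neg_zero] at h0'
  calc ∫ t in Set.Iio (0:ℝ), t * Real.exp (-z * t) / (1 - Real.exp (-t))
      = ∫ t in Set.Iic (0:ℝ), t * Real.exp (-z * t) / (1 - Real.exp (-t)) :=
        (integral_Iic_eq_integral_Iio).symm
    _ = ∫ s in Set.Ioi (0:ℝ),
          (fun t => t * Real.exp (-z*t)/(1-Real.exp (-t))) (-s) := h0'.symm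
    _ = ∫ s in Set.Ioi (0:ℝ), ∑' k, F k s := by
        refine setIntegral_congr_fun measurableSet_Ioi (fun s hs => ?_)
        have hs' : (0:ℝ) < s := hs
        have hlt : Real.exp (-s) < 1 := Real.exp_lt_one_iff.mpr (by linarith)
        have hgeom := hasSum_geometric_of_lt_one (Real.exp_nonneg (-s)) hlt
        have h2 := hgeom.mul_left (s * Real.exp (-((1-z)*s)))
        have h3 : (fun k : ℕ => s * Real.exp (-((1-z)*s)) * Real.exp (-s)^k)
            = fun k => F k s := by
          funext k
          rw [← Real.exp_nat_mul, mul_assoc, ← Real.exp_add]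
          congr 2
          ring
        rw [h3] at h2
        rw [h2.tsum_eq]
        have hes : 1 < Real.exp s := Real.one_lt_exp_iff.mpr hs'
        have hne1 : 1 - Real.exp s ≠ 0 := by intro h; linarith [sub_eq_zero.mp h]
        have hne2 : 1 - Real.exp (-s) ≠ 0 := by intro h; linarith [sub_eq_zero.mp h]
        have e1 : Real.exp (-z * -s) = Real.exp (-((1-z)*s)) * Real.exp s := by
          rw [← Real.exp_add]; congr 1; ring
        have hBC : Real.exp s * Real.exp (-s) = 1 := by rw [← Real.exp_add]; simp
        simp only [neg_neg]
        rw [e1]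
        field_simp
        linear_combination hBC
    _ = ∑' k : ℕ, ∫ s in Set.Ioi (0:ℝ), F k s := by
        refine (integral_tsum_of_summable_integral_norm (fun k => intF (hak k)) ?_).symm
        have : ∀ k : ℕ, ∫ s in Set.Ioi (0:ℝ), ‖F k s‖ = 1/((k:ℝ)+1-z)^2 := by
          intro k
          rw [← hval k]
          refine setIntegral_congr_fun measurableSet_Ioi (fun s hs => ?_)
          have : (0:ℝ) < s := hs
          rw [Real.norm_eq_abs, abs_of_nonneg (by positivity)]
        exact (summable_congr this).mpr hsum
    _ = ∑' k : ℕ, 1/((k:ℝ)+1-z)^2 := tsum_congr hval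
    _ = trigamma (1-z) := by
        unfold trigamma
        refine tsum_congr (fun k => ?_)
        congr 1
        ring
end

section
/- For every real z with 0 < z < 1, ∫_{−∞}^{∞} t·e^{−z t}/(1 − e^{−t}) dt = ψ¹(1 − z) + ψ¹(z), where ψ¹ is the trigamma function. -/
open MeasureTheory Set Real

lemma integrableOn_mul_exp (r : ℝ) (hr : 0 < r) :
    IntegrableOn (fun t => t * Real.exp (-(r*t))) (Ioi (0:ℝ)) := by
  have h0 := Real.GammaIntegral_convergent (s := 2) two_pos
  have h1 : IntegrableOn (fun x : ℝ => x * Real.exp (-x)) (Ioi 0) := by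
    refine h0.congr_fun (fun x hx => ?_) measurableSet_Ioi
    simp only [show ((2:ℝ)-1) = 1 by norm_num, Real.rpow_one]; ring
  have h2 := (integrableOn_Ioi_comp_mul_left_iff (fun x : ℝ => x * Real.exp (-x)) 0 hr).mpr
    (by simpa using h1)
  refine IntegrableOn.congr_fun (f := fun x => 1/r * (r * x * Real.exp (-(r*x))))
    (h2.const_mul (1/r)) (fun t ht => ?_) measurableSet_Ioi
  field_simp

lemma integral_mul_exp (r : ℝ) (hr : 0 < r) :
    ∫ t in Ioi (0:ℝ), t * Real.exp (-(r*t)) = 1/r^2 := by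
  have := Real.integral_rpow_mul_exp_neg_mul_Ioi (a := 2) two_pos hr
  rw [show ((2:ℝ)-1) = 1 by norm_num] at this
  simp_rw [Real.rpow_one] at this
  rw [this, Real.Gamma_two, mul_one,
    show ((2:ℝ)) = ((2:ℕ):ℝ) by norm_num, Real.rpow_natCast]
  rw [one_div, inv_pow, one_div]

lemma hasSum_pointwise (a t : ℝ) (ht : 0 < t) :
    HasSum (fun k : ℕ => t * Real.exp (-((a+k)*t)))
      (t * Real.exp (-a*t) / (1 - Real.exp (-t))) := by
  have hlt : Real.exp (-t) < 1 := by
    rw [Real.exp_lt_one_iff]; linarith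
  have hg := hasSum_geometric_of_lt_one (Real.exp_nonneg (-t)) hlt
  have := hg.mul_left (t * Real.exp (-a*t))
  rw [div_eq_mul_inv]
  convert this using 2 with k
  case e'_3 => rfl
  rw [← Real.exp_nat_mul, mul_assoc, ← Real.exp_add]
  congr 2
  ring

lemma key (a : ℝ) (ha : 0 < a) :
    IntegrableOn (fun t => t * Real.exp (-a*t) / (1 - Real.exp (-t))) (Ioi (0:ℝ)) ∧
    ∫ t in Ioi (0:ℝ), t * Real.exp (-a*t) / (1 - Real.exp (-t)) = trigamma a := by
  set F : ℕ → ℝ → ℝ := fun k t => t * Real.exp (-((a+k)*t)) with hF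
  have hint : ∀ k : ℕ, IntegrableOn (F k) (Ioi 0) := fun k =>
    integrableOn_mul_exp (a+k) (by positivity)
  have hval : ∀ k : ℕ, ∫ t in Ioi (0:ℝ), F k t = 1/(a+k)^2 := fun k =>
    integral_mul_exp (a+k) (by positivity)
  have hnormval : ∀ k : ℕ, (∫ t in Ioi (0:ℝ), ‖F k t‖) = 1/(a+k)^2 := by
    intro k
    rw [← hval k]
    refine setIntegral_congr_fun measurableSet_Ioi (fun t ht => ?_)
    exact Real.norm_of_nonneg (mul_nonneg (le_of_lt ht) (Real.exp_nonneg _))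
  have hsummable : Summable (fun k : ℕ => 1/(a+(k:ℝ))^2) := by
    have base := (summable_nat_add_iff (f := fun k : ℕ => 1/((k:ℝ))^2) 1).mpr
      (summable_one_div_nat_pow.mpr one_lt_two)
    rw [← summable_nat_add_iff 1]
    refine Summable.of_nonneg_of_le (fun k => div_nonneg zero_le_one (sq_nonneg _)) (fun k => ?_) base
    push_cast
    have hk : (0:ℝ) < (k:ℝ)+1 := by positivity
    rw [div_le_div_iff₀ (by positivity) (by positivity), one_mul, one_mul]
    nlinarith [Nat.cast_nonneg (α := ℝ) k]
  have hsum : Summable (fun k : ℕ => ∫ t in Ioi (0:ℝ), ‖F k t‖) := by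
    simp_rw [hnormval]; exact hsummable
  have hkey := hasSum_integral_of_summable_integral_norm (μ := volume.restrict (Ioi 0))
    hint hsum
  have heq : ∀ t ∈ Ioi (0:ℝ), (∑' k, F k t) = t * Real.exp (-a*t) / (1 - Real.exp (-t)) :=
    fun t ht => (hasSum_pointwise a t ht).tsum_eq
  constructor
  · -- integrability by domination
    have hb : IntegrableOn (fun t : ℝ => Real.exp (-(a*t)) + t * Real.exp (-(a*t))) (Ioi 0) :=
      (exp_neg_integrableOn_Ioi 0 ha).congr_fun (fun t _ => by rw [neg_mul]) measurableSet_Ioi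
        |>.add (integrableOn_mul_exp a ha)
    refine Integrable.mono' hb ?_ ?_
    · refine (ContinuousOn.aestronglyMeasurable ?_ measurableSet_Ioi)
      refine ContinuousOn.div (by fun_prop) (by fun_prop) (fun t ht => ?_)
      have : Real.exp (-t) < 1 := by rw [Real.exp_lt_one_iff]; simpa using ht
      linarith
    · filter_upwards [ae_restrict_mem measurableSet_Ioi] with t ht
      have ht' : (0:ℝ) < t := ht
      have hlt : Real.exp (-t) < 1 := by rw [Real.exp_lt_one_iff]; linarith
      have hpos : 0 < 1 - Real.exp (-t) := by linarith
      have hE : 0 < Real.exp (-(a*t)) := Real.exp_pos _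
      have h1t : (1+t) * Real.exp (-t) ≤ 1 := by
        rw [Real.exp_neg]
        rw [mul_inv_le_iff₀ (Real.exp_pos t), one_mul]
        have := Real.add_one_le_exp t
        linarith
      rw [Real.norm_of_nonneg (by positivity), neg_mul, div_le_iff₀ hpos]
      nlinarith [mul_nonneg hE.le (sub_nonneg.mpr h1t), mul_pos hE ht']
  · rw [← setIntegral_congr_fun measurableSet_Ioi heq, ← hkey.tsum_eq]
    unfold trigamma
    exact tsum_congr (fun k => hval k)

theorem stmt_10 (z : ℝ) (h0 : 0 < z) (h1 : z < 1) :
    ∫ t : ℝ, t * Real.exp (-z * t) / (1 - Real.exp (-t)) = trigamma (1 - z) + trigamma z := by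
  set f : ℝ → ℝ := fun t => t * Real.exp (-z * t) / (1 - Real.exp (-t)) with hf
  obtain ⟨hI2, hV2⟩ := key z h0
  obtain ⟨hI1, hV1⟩ := key (1-z) (by linarith)
  -- identity relating f (-x) to the reflected integrand
  have hrefl : ∀ x ∈ Ioi (0:ℝ), f (-x) = x * Real.exp (-(1-z)*x) / (1 - Real.exp (-x)) := by
    intro x hx
    have hx' : (0:ℝ) < x := hx
    have hgt : (1:ℝ) < Real.exp x := by
      rw [← Real.exp_zero]; exact Real.exp_lt_exp.mpr hx'
    have hne' : (1:ℝ) - Real.exp x ≠ 0 := by linarith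
    have hne3 : (-1:ℝ) + Real.exp x ≠ 0 := by linarith
    have hne'' : (1:ℝ) - Real.exp (-x) ≠ 0 := by
      have : Real.exp (-x) < 1 := by rw [Real.exp_lt_one_iff]; linarith
      linarith
    show (-x) * Real.exp (-z * (-x)) / (1 - Real.exp (-(-x))) = _
    rw [neg_neg]
    have e1 : Real.exp (-(1-z)*x) = Real.exp (z*x) * (Real.exp x)⁻¹ := by
      rw [← Real.exp_neg, ← Real.exp_add]; ring_nf
    have e2 : Real.exp (-x) = (Real.exp x)⁻¹ := Real.exp_neg x
    rw [show -z * -x = z * x by ring, e1, e2]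
    field_simp
    ring_nf
    field_simp [hne3]
    ring
  have hinegIoi : IntegrableOn (fun x => f (-x)) (Ioi 0) :=
    hI1.congr_fun (fun x hx => (hrefl x hx).symm) measurableSet_Ioi
  have hIiic : IntegrableOn f (Iic 0) := by
    rw [← Measure.map_neg_eq_self (volume : Measure ℝ)]
    have m : MeasurableEmbedding fun x : ℝ => -x := (Homeomorph.neg ℝ).measurableEmbedding
    rw [m.integrableOn_map_iff]
    simp_rw [Function.comp_def, neg_preimage, neg_Iic, neg_zero]
    exact Iff.mpr integrableOn_Ici_iff_integrableOn_Ioi hinegIoi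
  have hsplit := intervalIntegral.integral_Iic_add_Ioi (μ := volume) (b := (0:ℝ)) hIiic hI2
  rw [← hsplit, hV2]
  congr 1
  have hcn := integral_comp_neg_Ioi (0:ℝ) f
  rw [neg_zero] at hcn
  rw [← hcn, ← hV1]
  exact setIntegral_congr_fun measurableSet_Ioi hrefl
end

section
/- For every real n > 1, ∫₀^∞ (ln x)/(xⁿ + 1) dx = (π²/(4n²)) [ sec²(π/(2n)) − csc²(π/(2n)) ]. -/
open MeasureTheory Set Real Filter Topology Asymptotics

-- image of (0,1) under t/(1-t)
lemma img01 : (fun t : ℝ => t / (1 - t)) '' Ioo 0 1 = Ioi 0 := by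
  ext u
  constructor
  · rintro ⟨t, ⟨ht0, ht1⟩, rfl⟩
    exact div_pos ht0 (by linarith)
  · intro hu
    refine ⟨u / (1 + u), ⟨div_pos hu (by linarith [hu.out]), ?_⟩, ?_⟩
    · rw [div_lt_one (by linarith [hu.out])]; linarith [hu.out]
    · have h1 : (1:ℝ) + u ≠ 0 := by linarith [hu.out]
      field_simp
      ring

lemma betaRealIoo {x : ℝ} (hx : x ∈ Ioo (0:ℝ) 1) :
    ∫ t in Ioo (0:ℝ) 1, t ^ (x - 1) * (1 - t) ^ (-x) = π / Real.sin (π * x) := by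
  have h1 : Complex.betaIntegral x (1 - x) = ((π / Real.sin (π * x) : ℝ) : ℂ) := by
    have h := Complex.Gamma_mul_Gamma_eq_betaIntegral (s := (x:ℂ)) (t := 1 - (x:ℂ))
      (by simpa using hx.1) (by simp [Complex.sub_re]; linarith [hx.2])
    rw [add_sub_cancel, Complex.Gamma_one, one_mul] at h
    rw [← h]
    have : (1 - (x:ℂ)) = ((1 - x : ℝ) : ℂ) := by push_cast; ring
    rw [this, Complex.Gamma_ofReal, Complex.Gamma_ofReal, ← Complex.ofReal_mul,
      Real.Gamma_mul_Gamma_one_sub]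
  have h2 : Complex.betaIntegral x (1 - x) =
      ((∫ t in Ioo (0:ℝ) 1, t ^ (x - 1) * (1 - t) ^ (-x) : ℝ) : ℂ) := by
    rw [Complex.betaIntegral, intervalIntegral.integral_of_le zero_le_one,
      MeasureTheory.integral_Ioc_eq_integral_Ioo]
    refine (setIntegral_congr_fun measurableSet_Ioo (fun t ht => ?_)).trans (integral_ofReal (f := fun t => t ^ (x - 1) * (1 - t) ^ (-x)))
    have ht0 : (0:ℝ) ≤ t := le_of_lt ht.1
    have ht1 : (0:ℝ) ≤ 1 - t := by linarith [ht.2]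
    show (t:ℂ) ^ ((x:ℂ) - 1) * (1 - (t:ℂ)) ^ (1 - (x:ℂ) - 1) =
      ((t ^ (x - 1) * (1 - t) ^ (-x) : ℝ) : ℂ)
    rw [Complex.ofReal_mul, Complex.ofReal_cpow ht0, Complex.ofReal_cpow ht1]
    push_cast
    ring_nf
  have := h1.symm.trans h2
  exact_mod_cast this.symm

lemma betaIoi {x : ℝ} (hx : x ∈ Ioo (0:ℝ) 1) :
    ∫ t in Ioi (0:ℝ), t ^ (x - 1) / (1 + t) = π / Real.sin (π * x) := by
  have hderiv : ∀ t ∈ Ioo (0:ℝ) 1,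
      HasDerivWithinAt (fun t : ℝ => t / (1 - t)) ((1 - t)⁻¹ ^ 2) (Ioo 0 1) t := by
    intro t ht
    have h1 : (1:ℝ) - t ≠ 0 := by simp [Ioo] at ht; intro h; nlinarith [ht.2]
    have := ((hasDerivAt_id t).div ((hasDerivAt_id t).const_sub 1) h1)
    refine this.hasDerivWithinAt.congr_deriv ?_
    simp only [id]
    field_simp
    ring
  have hinj : InjOn (fun t : ℝ => t / (1 - t)) (Ioo 0 1) := by
    have : StrictMonoOn (fun t : ℝ => t / (1 - t)) (Ioo 0 1) := by
      intro s hs t ht hst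
      have h1 : (0:ℝ) < 1 - s := by linarith [hs.2]
      have h2 : (0:ℝ) < 1 - t := by linarith [ht.2]
      rw [div_lt_div_iff₀ h1 h2]
      nlinarith [hs.1]
    exact this.injOn
  have key := integral_image_eq_integral_abs_deriv_smul measurableSet_Ioo hderiv hinj
    (fun t => t ^ (x - 1) / (1 + t))
  rw [img01] at key
  rw [key, ← betaRealIoo hx]
  refine setIntegral_congr_fun measurableSet_Ioo (fun t ht => ?_)
  have h0 : (0:ℝ) < t := ht.1
  have h1 : (0:ℝ) < 1 - t := by linarith [ht.2]
  have e1 : (1:ℝ) + t / (1 - t) = (1 - t)⁻¹ := by field_simp; ring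
  have e2 : (t / (1 - t)) ^ (x - 1) = t ^ (x - 1) * (1 - t) ^ (1 - x) := by
    rw [div_rpow h0.le h1.le, show (1:ℝ) - x = -(x-1) by ring, Real.rpow_neg h1.le,
      div_eq_mul_inv]
  rw [smul_eq_mul, abs_of_pos (by positivity : (0:ℝ) < (1-t)⁻¹ ^ 2), e1, e2, show (-x) = (1 - x) + (-1) by ring, Real.rpow_add h1,
    Real.rpow_neg_one]
  have h2 : (1 - t) ^ (1 - x) ≠ 0 := (Real.rpow_pos_of_pos h1 _).ne'
  field_simp

noncomputable def mf : ℝ → ℂ := fun t => (((1 + t)⁻¹ : ℝ) : ℂ)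

lemma logBeta {a : ℝ} (ha : a ∈ Ioo (0:ℝ) 1) :
    ∫ t in Ioi (0:ℝ), t ^ (a - 1) * Real.log t / (1 + t) =
      -(π ^ 2 * Real.cos (π * a)) / (Real.sin (π * a)) ^ 2 := by
  have hsin : Real.sin (π * a) ≠ 0 := by
    apply ne_of_gt
    apply Real.sin_pos_of_pos_of_lt_pi (mul_pos Real.pi_pos ha.1)
    have := ha.2
    nlinarith [Real.pi_pos]
  -- Mellin derivative
  have hfc : LocallyIntegrableOn mf (Ioi 0) := by
    apply ContinuousOn.locallyIntegrableOn _ measurableSet_Ioi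
    apply Complex.continuous_ofReal.comp_continuousOn
    exact (continuousOn_const.add continuousOn_id).inv₀ (fun t ht => by
      have h0 : (0:ℝ) < t := ht
      show (1:ℝ) + t ≠ 0
      positivity)
  have hf_top : mf =O[atTop] (fun t : ℝ => t ^ (-1 : ℝ)) := by
    rw [Asymptotics.isBigO_iff]
    refine ⟨1, ?_⟩
    filter_upwards [eventually_ge_atTop (1:ℝ)] with t ht
    have h0 : (0:ℝ) < t := by linarith
    simp only [mf, Complex.norm_real, Real.norm_eq_abs, one_mul]
    rw [abs_of_pos (by positivity : (0:ℝ) < (1+t)⁻¹), Real.abs_rpow_of_nonneg h0.le,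
      Real.rpow_neg_one, abs_of_pos h0]
    exact inv_anti₀ h0 (by linarith)
  have hf_bot : mf =O[𝓝[>] (0:ℝ)] (fun t : ℝ => t ^ (-0 : ℝ)) := by
    rw [Asymptotics.isBigO_iff]
    refine ⟨1, ?_⟩
    filter_upwards [self_mem_nhdsWithin] with t (ht : (0:ℝ) < t)
    simp only [mf, Complex.norm_real, Real.norm_eq_abs, neg_zero, Real.rpow_zero]
    rw [abs_of_pos (by positivity : (0:ℝ) < (1+t)⁻¹), abs_one]
    simp only [one_mul]
    rw [inv_le_one_iff₀]
    right; linarith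
  have hM := mellin_hasDerivAt_of_isBigO_rpow (s := (a:ℂ)) hfc hf_top
    (by simpa using ha.2) hf_bot (by simpa using ha.1)
  have hDc : HasDerivAt (fun x : ℝ => mellin mf ↑x)
      (mellin (fun t => Real.log t • mf t) ↑a) a := hM.2.comp_ofReal
  have heq : (fun x : ℝ => mellin mf ↑x) =ᶠ[𝓝 a]
      fun x => ((π / Real.sin (π * x) : ℝ) : ℂ) := by
    filter_upwards [isOpen_Ioo.mem_nhds ha] with x hx
    rw [← betaIoi hx, mellin]
    refine (setIntegral_congr_fun measurableSet_Ioi fun t ht => ?_).trans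
      (integral_ofReal (f := fun t => t ^ (x - 1) / (1 + t)))
    show (t:ℂ) ^ ((x:ℂ) - 1) • (((1 + t)⁻¹ : ℝ) : ℂ) = ((t ^ (x - 1) / (1 + t) : ℝ) : ℂ)
    have ht0 : (0:ℝ) ≤ t := le_of_lt ht
    rw [smul_eq_mul, div_eq_mul_inv, Complex.ofReal_mul, Complex.ofReal_cpow ht0]
    push_cast
    ring
  have hD2 : mellin (fun t => Real.log t • mf t) ↑a =
      ((∫ t in Ioi (0:ℝ), t ^ (a - 1) * Real.log t / (1 + t) : ℝ) : ℂ) := by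
    rw [mellin]
    refine (setIntegral_congr_fun measurableSet_Ioi fun t ht => ?_).trans
      (integral_ofReal (f := fun t => t ^ (a - 1) * Real.log t / (1 + t)))
    show (t:ℂ) ^ ((a:ℂ) - 1) • (Real.log t • (((1 + t)⁻¹ : ℝ) : ℂ)) =
      ((t ^ (a - 1) * Real.log t / (1 + t) : ℝ) : ℂ)
    have ht0 : (0:ℝ) ≤ t := le_of_lt ht
    rw [smul_eq_mul, Complex.real_smul, div_eq_mul_inv, Complex.ofReal_mul,
      Complex.ofReal_mul, Complex.ofReal_cpow ht0]
    push_cast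
    ring
  have hg : HasDerivAt (fun x : ℝ => π / Real.sin (π * x))
      (-(π ^ 2 * Real.cos (π * a)) / (Real.sin (π * a)) ^ 2) a := by
    have hs : HasDerivAt (fun x : ℝ => Real.sin (π * x)) (Real.cos (π * a) * π) a := by
      simpa using ((hasDerivAt_id a).const_mul π).sin
    have h := (hasDerivAt_const a π).div hs hsin
    refine h.congr_deriv ?_
    ring
  have hgc : HasDerivAt (fun x : ℝ => ((π / Real.sin (π * x) : ℝ) : ℂ))
      ((-(π ^ 2 * Real.cos (π * a)) / (Real.sin (π * a)) ^ 2 : ℝ) : ℂ) a := hg.ofReal_comp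
  have huniq := ((heq.hasDerivAt_iff).mp hDc).unique hgc
  rw [hD2] at huniq
  exact_mod_cast huniq

theorem stmt_15 (n : ℝ) (hn : 1 < n) :
    ∫ x in Set.Ioi (0:ℝ), Real.log x / (x ^ n + 1) =
      (Real.pi^2 / (4 * n^2)) *
        ((1 / Real.cos (Real.pi / (2*n)))^2 - (1 / Real.sin (Real.pi / (2*n)))^2) := by
  have hn0 : (0:ℝ) < n := lt_trans one_pos hn
  have ha : (1/n) ∈ Ioo (0:ℝ) 1 := ⟨by positivity, by rw [div_lt_one hn0]; exact hn⟩
  have key := integral_comp_rpow_Ioi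
    (fun u => u ^ (1/n - 1) * Real.log u / (1 + u)) (ne_of_gt hn0)
  have hL : ∫ x in Ioi (0:ℝ), (|n| * x ^ (n - 1)) •
      ((x ^ n) ^ (1/n - 1) * Real.log (x ^ n) / (1 + x ^ n)) =
      ∫ x in Ioi (0:ℝ), n ^ 2 * (Real.log x / (x ^ n + 1)) := by
    refine setIntegral_congr_fun measurableSet_Ioi fun x hx => ?_
    have hx0 : (0:ℝ) < x := hx
    have e1 : (x ^ n) ^ (1/n - 1) = x ^ (1 - n) := by
      rw [← Real.rpow_mul hx0.le]
      congr 1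
      field_simp
    have e2 : Real.log (x ^ n) = n * Real.log x := Real.log_rpow hx0 n
    rw [smul_eq_mul, e1, e2, abs_of_pos hn0, add_comm (1:ℝ) (x ^ n)]
    have e3 : x ^ (n - 1) * x ^ (1 - n) = 1 := by
      rw [← Real.rpow_add hx0]; norm_num
    field_simp
    linear_combination (Real.log x) * e3
  have hJ := logBeta ha
  have h2 : n ^ 2 * ∫ x in Ioi (0:ℝ), Real.log x / (x ^ n + 1) =
      -(π ^ 2 * Real.cos (π * (1/n))) / (Real.sin (π * (1/n))) ^ 2 := by
    rw [← MeasureTheory.integral_const_mul, ← hL, key]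
    exact hJ
  have hth1 : 0 < π / (2 * n) := by positivity
  have hth2 : π / (2 * n) < π / 2 := by
    apply div_lt_div_of_pos_left Real.pi_pos (by norm_num) (by linarith)
  have hcos : Real.cos (π / (2 * n)) ≠ 0 := by
    apply ne_of_gt
    apply Real.cos_pos_of_mem_Ioo
    constructor
    · linarith [Real.pi_pos]
    · exact hth2
  have hsin : Real.sin (π / (2 * n)) ≠ 0 := by
    apply ne_of_gt
    apply Real.sin_pos_of_pos_of_lt_pi hth1
    linarith [Real.pi_pos, hth2]
  have e2θ : π * (1/n) = 2 * (π / (2 * n)) := by field_simp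
  rw [e2θ, Real.cos_two_mul', Real.sin_two_mul] at h2
  have hn2 : (n:ℝ) ^ 2 ≠ 0 := by positivity
  rw [eq_comm, ← mul_right_inj' hn2, h2]
  generalize π / (2 * n) = θ at hcos hsin ⊢
  field_simp
  ring
end
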